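/- arXiv:2508.21500 — 15 statements merged into one kernel-verified Lean document; each statement's English description precedes it below -/
import Mathlib

section
/- Let G be a nontrivial totally ordered Specker ℓ-group, i.e., a nontrivial linearly ordered abelian group that is generated, as a group, by its set of singular elements. Then there exists a unique map φ : G → ℤ that is simultaneously a group isomorphism and an order isomorphism onto ℤ with its natural order. -/
/-- An element `s` of an abelian ℓ-group is singular if `0 ≤ s` and
`a ⊓ (s - a) = 0` for all `0 ≤ a ≤ s`. -/
def IsSingular {G : Type*} [Lattice G] [AddCommGroup G] (s : G) : Prop :=
  0 ≤ s ∧ ∀ a : G, 0 ≤ a → a ≤ s → a ⊓ (s - a) = 0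

/-- A nontrivial totally ordered Specker ℓ-group admits a unique map to `ℤ`
that is simultaneously a group isomorphism and an order isomorphism. -/
theorem stmt1 {G : Type*} [AddCommGroup G] [LinearOrder G] [IsOrderedAddMonoid G] [Nontrivial G]
    (hSpecker : AddSubgroup.closure {s : G | IsSingular s} = ⊤) :
    ∃! φ : G → ℤ, Function.Bijective φ ∧ (∀ x y : G, φ (x + y) = φ x + φ y) ∧
      (∀ x y : G, x ≤ y ↔ φ x ≤ φ y) := by
  -- In a linear order, singularity means every 0 ≤ a ≤ s is 0 or s.
  have hsing : ∀ s : G, IsSingular s → ∀ a : G, 0 ≤ a → a ≤ s → a = 0 ∨ a = s := by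
    intro s hs a ha has
    have h := hs.2 a ha has
    rcases le_total a (s - a) with h' | h'
    · left; rwa [inf_eq_left.mpr h'] at h
    · right
      have : s - a = 0 := by rwa [inf_eq_right.mpr h'] at h
      exact (sub_eq_zero.mp this).symm
  -- There is a nonzero singular element.
  obtain ⟨s, hs, hsne⟩ : ∃ s : G, IsSingular s ∧ s ≠ 0 := by
    by_contra h
    push_neg at h
    have hsub : {s : G | IsSingular s} ⊆ (⊥ : AddSubgroup G) := by
      intro t ht
      simpa [AddSubgroup.mem_bot] using h t ht
    have hle : AddSubgroup.closure {s : G | IsSingular s} ≤ ⊥ :=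
      (AddSubgroup.closure_le _).mpr hsub
    rw [hSpecker] at hle
    obtain ⟨x, hx⟩ := exists_ne (0 : G)
    exact hx (AddSubgroup.mem_bot.mp (hle (AddSubgroup.mem_top x)))
  have hspos : 0 < s := hs.1.lt_of_ne (Ne.symm hsne)
  -- Every singular element is 0 or s, hence G = ℤ • s.
  have hmem : ∀ x : G, ∃ n : ℤ, n • s = x := by
    have hle : AddSubgroup.closure {t : G | IsSingular t} ≤ AddSubgroup.zmultiples s := by
      apply (AddSubgroup.closure_le _).mpr
      intro t ht
      rcases le_total t s with h' | h'
      · rcases hsing s hs t ht.1 h' with rfl | rfl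
        · exact zero_mem _
        · exact AddSubgroup.mem_zmultiples t
      · rcases hsing t ht s hs.1 h' with h0 | h0
        · exact absurd h0 hsne
        · rw [h0]; exact AddSubgroup.mem_zmultiples t
    rw [hSpecker] at hle
    intro x
    exact AddSubgroup.mem_zmultiples_iff.mp (hle (AddSubgroup.mem_top x))
  have hinj : ∀ m n : ℤ, m • s = n • s → m = n := fun m n h =>
    le_antisymm ((zsmul_le_zsmul_iff_left hspos).mp h.le)
      ((zsmul_le_zsmul_iff_left hspos).mp h.ge)
  choose f hf using hmem
  have hfs : ∀ n : ℤ, f (n • s) = n := fun n => hinj _ _ (hf (n • s))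
  have hadd : ∀ x y : G, f (x + y) = f x + f y := by
    intro x y
    apply hinj
    rw [hf, add_zsmul, hf, hf]
  have horder : ∀ x y : G, x ≤ y ↔ f x ≤ f y := by
    intro x y
    rw [← hf x, ← hf y, hfs, hfs, zsmul_le_zsmul_iff_left hspos]
  have hbij : Function.Bijective f := by
    constructor
    · intro x y hxy
      rw [← hf x, ← hf y, hxy]
    · intro n
      exact ⟨n • s, hfs n⟩
  refine ⟨f, ⟨hbij, hadd, horder⟩, ?_⟩
  rintro ψ ⟨hψbij, hψadd, hψord⟩
  -- ψ as an additive hom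
  set Ψ : G →+ ℤ := AddMonoidHom.mk' ψ hψadd with hΨ
  have hψ0 : ψ 0 = 0 := Ψ.map_zero
  have hψstrict : ∀ x y : G, x < y → ψ x < ψ y := by
    intro x y hxy
    exact lt_of_le_of_ne ((hψord x y).mp hxy.le) fun h => hxy.ne (hψbij.1 h)
  have hψs1 : ψ s = 1 := by
    have hpos : 0 < ψ s := hψ0 ▸ hψstrict 0 s hspos
    obtain ⟨x, hx⟩ := hψbij.2 1
    have hx0 : 0 ≤ x := by
      rw [hψord 0 x, hψ0, hx]; omega
    have hxs : x ≤ s := by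
      rw [hψord x s, hx]; omega
    rcases hsing s hs x hx0 hxs with rfl | rfl
    · rw [hψ0] at hx; omega
    · omega
  funext x
  calc ψ x = ψ (f x • s) := by rw [hf]
    _ = f x • ψ s := Ψ.map_zsmul (f x) s
    _ = f x := by rw [hψs1]; simp
end

section
/- Any surjective ℓ-homomorphism between abelian ℓ-groups maps singular elements to singular elements: if f : S → T is a surjective ℓ-homomorphism and s ∈ S is singular, then f(s) is singular in T. -/
/-- A surjective ℓ-homomorphism between abelian ℓ-groups maps singular
elements to singular elements. -/
theorem stmt2 {S T : Type*}
    [Lattice S] [AddCommGroup S] [CovariantClass S S (· + ·) (· ≤ ·)]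
    [Lattice T] [AddCommGroup T] [CovariantClass T T (· + ·) (· ≤ ·)]
    (f : S → T)
    (hadd : ∀ x y : S, f (x + y) = f x + f y)
    (hsup : ∀ x y : S, f (x ⊔ y) = f x ⊔ f y)
    (hinf : ∀ x y : S, f (x ⊓ y) = f x ⊓ f y)
    (hsurj : Function.Surjective f)
    (s : S) (hs : IsSingular s) : IsSingular (f s) := by
  obtain ⟨hs0, hsing⟩ := hs
  have hf0 : f 0 = 0 := by
    have h := hadd 0 0
    rw [add_zero] at h
    exact (left_eq_add.mp h)
  have hsub : ∀ x y : S, f (x - y) = f x - f y := by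
    intro x y
    have h := hadd (x - y) y
    rw [sub_add_cancel] at h
    rw [eq_sub_iff_add_eq, ← h]
  have hmono : ∀ x y : S, x ≤ y → f x ≤ f y := by
    intro x y hxy
    have h := hsup x y
    rw [sup_eq_right.mpr hxy] at h
    exact le_sup_left.trans h.ge
  refine ⟨hf0 ▸ hmono 0 s hs0, ?_⟩
  intro b hb0 hbs
  obtain ⟨x, rfl⟩ := hsurj b
  set a := (x ⊔ 0) ⊓ s with ha
  have ha0 : 0 ≤ a := le_inf le_sup_right hs0
  have has : a ≤ s := inf_le_right
  have hfa : f a = f x := by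
    rw [ha, hinf, hsup, hf0, sup_eq_left.mpr hb0, inf_eq_left.mpr hbs]
  calc f x ⊓ (f s - f x) = f (a ⊓ (s - a)) := by rw [hinf, hsub, hfa]
    _ = 0 := by rw [hsing a ha0 has, hf0]
end

section
/- Let S be a Specker ℓ-group and m a maximal ℓ-ideal of S. Then there exists exactly one surjective ℓ-homomorphism ρ : S → ℤ whose kernel (the preimage of {0}) is m. -/
/-- An ℓ-ideal of an abelian ℓ-group is an additive subgroup that is
order-convex with respect to absolute values. -/
def IsLIdeal {G : Type*} [Lattice G] [AddCommGroup G] (J : AddSubgroup G) : Prop :=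
  ∀ a b : G, |a| ≤ |b| → b ∈ J → a ∈ J

/-- A maximal ℓ-ideal is a proper ℓ-ideal not strictly contained in any
proper ℓ-ideal. -/
def IsMaximalLIdeal {G : Type*} [Lattice G] [AddCommGroup G] (J : AddSubgroup G) : Prop :=
  IsLIdeal J ∧ J ≠ ⊤ ∧ ∀ K : AddSubgroup G, IsLIdeal K → K ≠ ⊤ → J ≤ K → J = K

section Aux

variable {S : Type*} [Lattice S] [AddCommGroup S] [CovariantClass S S (· + ·) (· ≤ ·)]

/-- Riesz-type decomposition identity. -/
lemma riesz_aux (a b : S) : a = a ⊓ b + (a - b)⁺ := by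
  have h := inf_eq_sub_posPart_sub a b
  rw [h]; abel

lemma inf_add_le_aux {a b c : S} (ha : 0 ≤ a) (hb : 0 ≤ b) (hc : 0 ≤ c) :
    a ⊓ (b + c) ≤ a ⊓ b + a ⊓ c := by
  set d := a ⊓ (b + c) with hd
  have hdr : d = d ⊓ b + (d - b)⁺ := riesz_aux d b
  have h1 : d ⊓ b ≤ a ⊓ b := inf_le_inf_right b inf_le_left
  have h2 : (d - b)⁺ ≤ a ⊓ c := by
    rw [posPart_def]
    refine sup_le (le_inf ?_ ?_) (le_inf ha hc)
    · calc d - b ≤ d - 0 := by exact sub_le_sub_left hb d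
        _ = d := sub_zero d
        _ ≤ a := inf_le_left
    · have : d ≤ b + c := inf_le_right
      exact sub_le_iff_le_add'.mpr this
  calc d = d ⊓ b + (d - b)⁺ := hdr
    _ ≤ a ⊓ b + a ⊓ c := add_le_add h1 h2

lemma disjoint_add_aux {a b c : S} (ha : 0 ≤ a) (hb : 0 ≤ b) (hc : 0 ≤ c)
    (h1 : a ⊓ b = 0) (h2 : a ⊓ c = 0) : a ⊓ (b + c) = 0 := by
  refine le_antisymm ?_ (le_inf ha (add_nonneg hb hc))
  calc a ⊓ (b + c) ≤ a ⊓ b + a ⊓ c := inf_add_le_aux ha hb hc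
    _ = 0 := by rw [h1, h2, add_zero]

lemma disjoint_nsmul_aux {a b : S} (ha : 0 ≤ a) (hb : 0 ≤ b)
    (h : b ⊓ a = 0) (n : ℕ) : b ⊓ (n • a) = 0 := by
  induction n with
  | zero => simpa using inf_eq_right.mpr hb
  | succ k ih =>
      rw [succ_nsmul]
      exact disjoint_add_aux hb (nsmul_nonneg ha k) ha ih h

end Aux

/-- For every maximal ℓ-ideal `m` of a Specker ℓ-group `S` there is exactly one
surjective ℓ-homomorphism `S → ℤ` with kernel `m`. -/
theorem stmt4 {S : Type*}
    [Lattice S] [AddCommGroup S] [CovariantClass S S (· + ·) (· ≤ ·)]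
    (hSpecker : AddSubgroup.closure {s : S | IsSingular s} = ⊤)
    (m : AddSubgroup S) (hm : IsMaximalLIdeal m) :
    ∃! ρ : S → ℤ, (∀ x y : S, ρ (x + y) = ρ x + ρ y) ∧
      (∀ x y : S, ρ (x ⊔ y) = ρ x ⊔ ρ y) ∧
      (∀ x y : S, ρ (x ⊓ y) = ρ x ⊓ ρ y) ∧
      Function.Surjective ρ ∧ ρ ⁻¹' {0} = (m : Set S) := by
  classical
  obtain ⟨hI, hproper, hmax⟩ := hm
  -- two disjoint nonnegative elements cannot both lie outside m
  have key_disjoint : ∀ a b : S, 0 ≤ a → 0 ≤ b → a ⊓ b = 0 → a ∈ m ∨ b ∈ m := by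
    intro a b ha hb hab
    by_contra hcon
    push_neg at hcon
    obtain ⟨ham, hbm⟩ := hcon
    -- ideal generated by m and a
    set K : AddSubgroup S :=
      { carrier := {x | ∃ n : ℕ, ∃ g ∈ m, 0 ≤ g ∧ |x| ≤ n • a + g}
        zero_mem' := ⟨0, 0, m.zero_mem, le_refl 0, by simp⟩
        add_mem' := by
          rintro x y ⟨n, g, hg, hg0, hx⟩ ⟨k, h, hh, hh0, hy⟩
          refine ⟨n + k, g + h, m.add_mem hg hh, add_nonneg hg0 hh0, ?_⟩
          calc |x + y| ≤ |x| + |y| := abs_add_le x y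
            _ ≤ (n • a + g) + (k • a + h) := add_le_add hx hy
            _ = (n + k) • a + (g + h) := by rw [add_nsmul]; abel
        neg_mem' := by
          rintro x ⟨n, g, hg, hg0, hx⟩
          exact ⟨n, g, hg, hg0, by rwa [abs_neg]⟩ } with hKdef
    have hKideal : IsLIdeal K := by
      rintro x y hxy ⟨n, g, hg, hg0, hy⟩
      exact ⟨n, g, hg, hg0, hxy.trans hy⟩
    have hmK : m ≤ K := by
      intro g hg
      refine ⟨0, |g|, hI |g| g (by rw [abs_abs]) hg, abs_nonneg g, ?_⟩
      simp
    have haK : a ∈ K := ⟨1, 0, m.zero_mem, le_refl 0, by simp [abs_of_nonneg ha]⟩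
    have hKproper : K ≠ ⊤ := by
      intro htop
      have hbK : b ∈ K := by rw [htop]; trivial
      obtain ⟨n, g, hg, hg0, hb_le⟩ := hbK
      rw [abs_of_nonneg hb] at hb_le
      have hbd : b ⊓ (n • a) = 0 := disjoint_nsmul_aux ha hb (by rw [inf_comm]; exact hab) n
      have hdec : b = b ⊓ (n • a) + (b - n • a)⁺ := riesz_aux b (n • a)
      have hple : (b - n • a)⁺ ≤ g := by
        rw [posPart_def]
        exact sup_le (sub_le_iff_le_add'.mpr hb_le) hg0
      have hpos : (0 : S) ≤ (b - n • a)⁺ := posPart_nonneg _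
      have hpm : (b - n • a)⁺ ∈ m := by
        refine hI _ g ?_ hg
        rw [abs_of_nonneg hpos, abs_of_nonneg hg0]; exact hple
      have : b ∈ m := by
        rw [hdec, hbd, zero_add]; exact hpm
      exact hbm this
    have := hmax K hKideal hKproper hmK
    exact ham (this ▸ haK)
  -- a nonzero multiple of something outside m forces membership
  -- there is a singular element outside m
  have hu : ∃ u : S, IsSingular u ∧ u ∉ m := by
    by_contra hcon
    push_neg at hcon
    have hsub : {s : S | IsSingular s} ⊆ (m : Set S) := by
      intro s hs
      exact hcon s hs
    have : AddSubgroup.closure {s : S | IsSingular s} ≤ m :=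
      (AddSubgroup.closure_le m).mpr hsub
    rw [hSpecker] at this
    exact hproper (le_antisymm le_top this)
  obtain ⟨u, husing, hum⟩ := hu
  have hu0 : 0 ≤ u := husing.1
  -- uniqueness of integer multiples
  have hzsmul : ∀ n : ℤ, n • u ∈ m → n = 0 := by
    have hpos : ∀ n : ℤ, 0 < n → n • u ∈ m → False := by
      intro n hn hmem
      have h1 : u ≤ n • u := by
        have : (0 : S) ≤ (n - 1) • u := zsmul_nonneg hu0 (by omega)
        calc u = 1 • u := (one_zsmul u).symm
          _ ≤ 1 • u + (n - 1) • u := le_add_of_nonneg_right this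
          _ = n • u := by rw [← add_zsmul]; norm_num
      have : u ∈ m := by
        refine hI u (n • u) ?_ hmem
        rw [abs_of_nonneg hu0, abs_of_nonneg (zsmul_nonneg hu0 hn.le)]
        exact h1
      exact hum this
    intro n hmem
    rcases lt_trichotomy n 0 with h | h | h
    · exfalso
      refine hpos (-n) (by omega) ?_
      rw [neg_zsmul]
      exact m.neg_mem hmem
    · exact h
    · exact absurd hmem (fun hh => hpos n h hh)
  -- singular elements outside m are congruent to u
  have claim3 : ∀ s : S, IsSingular s → s ∉ m → s - u ∈ m := by
    intro s hs hsm
    set a := s ⊓ u with hadef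
    have ha0 : 0 ≤ a := le_inf hs.1 hu0
    have ham : a ∉ m := by
      intro ham
      have hd : (s - a) ⊓ (u - a) = 0 := by
        rw [← inf_sub, ← hadef, sub_self]
      have h1 : 0 ≤ s - a := sub_nonneg.mpr inf_le_left
      have h2 : 0 ≤ u - a := sub_nonneg.mpr inf_le_right
      rcases key_disjoint _ _ h1 h2 hd with h | h
      · exact hsm (by simpa using m.add_mem h ham)
      · exact hum (by simpa using m.add_mem h ham)
    have hsa : s - a ∈ m := by
      rcases key_disjoint a (s - a) ha0 (sub_nonneg.mpr inf_le_left)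
        (hs.2 a ha0 inf_le_left) with h | h
      · exact absurd h ham
      · exact h
    have hua : u - a ∈ m := by
      rcases key_disjoint a (u - a) ha0 (sub_nonneg.mpr inf_le_right)
        (husing.2 a ha0 inf_le_right) with h | h
      · exact absurd h ham
      · exact h
    have : s - u = (s - a) - (u - a) := by abel
    rw [this]
    exact m.sub_mem hsa hua
  -- existence of integer coordinates
  have hex : ∀ x : S, ∃ n : ℤ, x - n • u ∈ m := by
    set P : AddSubgroup S :=
      { carrier := {x | ∃ n : ℤ, x - n • u ∈ m}
        zero_mem' := ⟨0, by simpa using m.zero_mem⟩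
        add_mem' := by
          rintro x y ⟨n, hn⟩ ⟨k, hk⟩
          refine ⟨n + k, ?_⟩
          have e : x + y - (n + k) • u = (x - n • u) + (y - k • u) := by
            rw [add_zsmul]; abel
          rw [e]; exact m.add_mem hn hk
        neg_mem' := by
          rintro x ⟨n, hn⟩
          refine ⟨-n, ?_⟩
          have e : -x - (-n) • u = -(x - n • u) := by rw [neg_zsmul]; abel
          rw [e]; exact m.neg_mem hn } with hPdef
    have hP : (⊤ : AddSubgroup S) ≤ P := by
      rw [← hSpecker]
      refine AddSubgroup.closure_le P |>.mpr ?_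
      intro s hs
      by_cases hsm : s ∈ m
      · exact ⟨0, by simpa using hsm⟩
      · exact ⟨1, by rw [one_zsmul]; exact claim3 s hs hsm⟩
    intro x
    exact hP (by trivial)
  set ρ : S → ℤ := fun x => Classical.choose (hex x) with hρdef
  have hspec : ∀ x : S, x - ρ x • u ∈ m := fun x => Classical.choose_spec (hex x)
  have huniq : ∀ (x : S) (n : ℤ), x - n • u ∈ m → ρ x = n := by
    intro x n hn
    have hd : (ρ x - n) • u ∈ m := by
      have e : (ρ x - n) • u = (x - n • u) - (x - ρ x • u) := by
        rw [sub_zsmul]; abel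
      rw [e]; exact m.sub_mem hn (hspec x)
    have := hzsmul _ hd
    omega
  have hmem_iff : ∀ x : S, x ∈ m ↔ ρ x = 0 := by
    intro x
    constructor
    · intro hx; exact huniq x 0 (by simpa using hx)
    · intro hx
      have := hspec x
      rw [hx] at this; simpa using this
  have hcong : ∀ x y : S, x - y ∈ m → ρ x = ρ y := by
    intro x y hxy
    refine huniq x (ρ y) ?_
    have e : x - ρ y • u = (x - y) + (y - ρ y • u) := by abel
    rw [e]; exact m.add_mem hxy (hspec y)
  have hadd : ∀ x y : S, ρ (x + y) = ρ x + ρ y := by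
    intro x y
    refine huniq (x + y) (ρ x + ρ y) ?_
    have e : x + y - (ρ x + ρ y) • u = (x - ρ x • u) + (y - ρ y • u) := by
      rw [add_zsmul]; abel
    rw [e]; exact m.add_mem (hspec x) (hspec y)
  have hsubρ : ∀ x y : S, ρ (x - y) = ρ x - ρ y := by
    intro x y
    refine huniq (x - y) (ρ x - ρ y) ?_
    have e : x - y - (ρ x - ρ y) • u = (x - ρ x • u) - (y - ρ y • u) := by
      rw [sub_zsmul]; abel
    rw [e]; exact m.sub_mem (hspec x) (hspec y)
  -- monotonicity modulo m
  have hmono : ∀ z : S, z⁺ ∈ m → ρ z ≤ 0 := by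
    intro z hz
    by_contra hcon
    push_neg at hcon
    have h1 : z - ρ z • u ∈ m := hspec z
    have h2 : z⁺ - (ρ z • u)⁺ ∈ m := by
      refine hI _ _ ?_ h1
      have e : z⁺ - (ρ z • u)⁺ = z ⊔ 0 - (ρ z • u ⊔ 0) := by
        rw [posPart_def, posPart_def]
      rw [e]
      exact abs_sup_sub_sup_le_abs z (ρ z • u) 0
    have h3 : (ρ z • u)⁺ = ρ z • u := posPart_eq_self.mpr (zsmul_nonneg hu0 hcon.le)
    rw [h3] at h2
    have h4 : ρ z • u ∈ m := by
      have e : ρ z • u = z⁺ - (z⁺ - ρ z • u) := by abel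
      rw [e]; exact m.sub_mem hz h2
    have := hzsmul _ h4
    omega
  -- sup/inf preservation, one-sided version
  have haux : ∀ x y : S, (x - y)⁺ ∈ m →
      ρ (x ⊔ y) = ρ x ⊔ ρ y ∧ ρ (x ⊓ y) = ρ x ⊓ ρ y := by
    intro x y h
    have hle : ρ x ≤ ρ y := by
      have := hmono (x - y) h
      rw [hsubρ] at this
      omega
    have hsup : ρ (x ⊔ y) = ρ y := by
      refine hcong _ _ ?_
      have e : x ⊔ y - y = (x - y)⁺ := by
        rw [sup_eq_add_posPart_sub x y]; abel
      rw [e]; exact h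
    have hinf : ρ (x ⊓ y) = ρ x := by
      refine hcong _ _ ?_
      have e : x ⊓ y - x = -((x - y)⁺) := by
        rw [inf_eq_sub_posPart_sub x y]; abel
      rw [e]; exact m.neg_mem h
    constructor
    · rw [hsup, sup_eq_right.mpr hle]
    · rw [hinf, inf_eq_left.mpr hle]
  have hsupinf : ∀ x y : S, ρ (x ⊔ y) = ρ x ⊔ ρ y ∧ ρ (x ⊓ y) = ρ x ⊓ ρ y := by
    intro x y
    have hd : (x - y)⁺ ⊓ (x - y)⁻ = 0 := posPart_inf_negPart_eq_zero (x - y)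
    rcases key_disjoint _ _ (posPart_nonneg _) (negPart_nonneg _) hd with h | h
    · exact haux x y h
    · have h' : (y - x)⁺ ∈ m := by
        rwa [← neg_sub x y, posPart_neg]
      have := haux y x h'
      rw [sup_comm, inf_comm, sup_comm (ρ x), inf_comm (ρ x)]
      exact this
  refine ⟨ρ, ⟨hadd, fun x y => (hsupinf x y).1, fun x y => (hsupinf x y).2, ?_, ?_⟩, ?_⟩
  · -- surjectivity
    intro n
    exact ⟨n • u, huniq _ n (by simpa using m.zero_mem)⟩
  · -- kernel
    ext x
    simp only [Set.mem_preimage, Set.mem_singleton_iff, SetLike.mem_coe]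
    exact ⟨fun h => (hmem_iff x).mpr h, fun h => (hmem_iff x).mp h⟩
  · -- uniqueness
    rintro ρ' ⟨hadd', hsup', hinf', hsurj', hker'⟩
    set f : S →+ ℤ := AddMonoidHom.mk' ρ' hadd' with hfdef
    have hf : ∀ x, f x = ρ' x := fun x => rfl
    have hker'' : ∀ z : S, z ∈ m → ρ' z = 0 := by
      intro z hz
      have : z ∈ ρ' ⁻¹' {0} := by rw [hker']; exact hz
      simpa using this
    have hzs : ∀ (n : ℤ) (z : S), ρ' (n • z) = n * ρ' z := by
      intro n z
      rw [← hf, map_zsmul, smul_eq_mul, hf]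
    have hsub'' : ∀ x y : S, ρ' (x - y) = ρ' x - ρ' y := by
      intro x y
      rw [← hf, map_sub, hf, hf]
    have hx2 : ∀ x : S, ρ' x = ρ x * ρ' u := by
      intro x
      have h1 : ρ' (x - ρ x • u) = 0 := hker'' _ (hspec x)
      rw [hsub'', hzs] at h1
      linarith
    have hρ'u : ρ' u = 1 := by
      have hnn : 0 ≤ ρ' u := by
        have e : u ⊔ 0 = u := sup_eq_left.mpr hu0
        have h0 : ρ' 0 = 0 := by
          have h00 := hadd' 0 0
          simp only [add_zero] at h00
          omega
        have hh := hsup' u 0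
        rw [e, h0] at hh
        rw [hh]
        exact le_sup_right
      obtain ⟨x, hx⟩ := hsurj' 1
      have h1 : ρ' u * ρ x = 1 := by rw [mul_comm, ← hx2 x, hx]
      have : IsUnit (ρ' u) := IsUnit.of_mul_eq_one _ h1
      rcases Int.isUnit_iff.mp this with h | h
      · exact h
      · omega
    funext x
    rw [hx2 x, hρ'u, mul_one]
end

section
/- Let S be a Specker ℓ-group possessing a greatest singular element s (i.e., s is singular and every singular element of S is ≤ s), and let ρ : S → ℤ be a surjective ℓ-homomorphism. Then ρ(s) = 1. -/
/-- A surjective ℓ-homomorphism from a Specker ℓ-group possessing a greatest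
singular element `s` to `ℤ` maps `s` to `1`. -/
theorem stmt5 {S : Type*}
    [Lattice S] [AddCommGroup S] [CovariantClass S S (· + ·) (· ≤ ·)]
    (hSpecker : AddSubgroup.closure {s : S | IsSingular s} = ⊤)
    (s : S) (hs : IsSingular s) (hgreatest : ∀ t : S, IsSingular t → t ≤ s)
    (ρ : S → ℤ)
    (hadd : ∀ x y : S, ρ (x + y) = ρ x + ρ y)
    (hsup : ∀ x y : S, ρ (x ⊔ y) = ρ x ⊔ ρ y)
    (hinf : ∀ x y : S, ρ (x ⊓ y) = ρ x ⊓ ρ y)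
    (hsurj : Function.Surjective ρ) : ρ s = 1 := by
  have h0 : ρ 0 = 0 := by
    have := hadd 0 0; simpa using this
  have hmono : ∀ x y : S, x ≤ y → ρ x ≤ ρ y := by
    intro x y h
    have := hsup x y
    rw [sup_eq_right.mpr h] at this
    rw [this]; exact le_sup_left
  have hsub : ∀ x y : S, ρ (x - y) = ρ x - ρ y := by
    intro x y
    have := hadd (x - y) y
    simp at this
    omega
  -- ρ s is singular in ℤ
  have hsing : ∀ a : ℤ, 0 ≤ a → a ≤ ρ s → a ⊓ (ρ s - a) = 0 := by
    intro a ha has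
    obtain ⟨b, hb⟩ := hsurj a
    set c := (b ⊔ 0) ⊓ s with hc
    have hc0 : (0 : S) ≤ c := le_inf le_sup_right hs.1
    have hcs : c ≤ s := inf_le_right
    have hρc : ρ c = a := by
      rw [hc, hinf, hsup, hb, h0, sup_eq_left.mpr ha, inf_eq_left.mpr has]
    have := hs.2 c hc0 hcs
    have h2 : ρ (c ⊓ (s - c)) = ρ 0 := by rw [this]
    rw [hinf, hsub, h0, hρc] at h2
    exact h2
  have hρs0 : 0 ≤ ρ s := by rw [← h0]; exact hmono 0 s hs.1
  have hle1 : ρ s ≤ 1 := by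
    by_contra h
    push_neg at h
    have := hsing 1 (by omega) (by omega)
    omega
  -- rule out ρ s = 0
  rcases eq_or_lt_of_le hle1 with h | h
  · exact h
  · exfalso
    have hρs : ρ s = 0 := by omega
    -- all singular elements map to 0
    have hker : ∀ t : S, IsSingular t → ρ t = 0 := by
      intro t ht
      have h1 : ρ t ≤ 0 := by rw [← hρs]; exact hmono t s (hgreatest t ht)
      have h2 : 0 ≤ ρ t := by rw [← h0]; exact hmono 0 t ht.1
      omega
    let f : S →+ ℤ := AddMonoidHom.mk' ρ hadd
    have hclos : AddSubgroup.closure {t : S | IsSingular t} ≤ f.ker := by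
      rw [AddSubgroup.closure_le]
      intro t ht
      exact hker t ht
    rw [hSpecker, top_le_iff] at hclos
    obtain ⟨y, hy⟩ := hsurj 1
    have : f y = 0 := by
      have : y ∈ f.ker := by rw [hclos]; trivial
      exact this
    simp only [f, AddMonoidHom.mk'_apply] at this
    omega
end

section
/- Let X be a boolean space. An element f of the abelian ℓ-group C(X, ℤ) is singular if and only if f takes only the values 0 and 1, i.e., f is the characteristic (indicator) function of a clopen subset of X. -/
/-- In `C(X, ℤ)` for a boolean space `X`, the singular elements are exactly the
functions taking only the values `0` and `1`, i.e. the characteristic functions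
of clopen subsets of `X`. -/
theorem stmt6 {X : Type*} [TopologicalSpace X] [CompactSpace X] [T2Space X]
    [TotallyDisconnectedSpace X] (f : C(X, ℤ)) :
    IsSingular f ↔ ∀ x : X, f x = 0 ∨ f x = 1 := by
  constructor
  · rintro ⟨hf0, hs⟩ x
    have h0 : (0 : ℤ) ≤ f x := hf0 x
    have ha : f ⊓ 1 ⊓ (f - f ⊓ 1) = 0 :=
      hs (f ⊓ 1) (le_inf hf0 (fun x => zero_le_one)) inf_le_left
    have hx := congrFun (congrArg DFunLike.coe ha) x
    simp only [ContinuousMap.inf_apply, ContinuousMap.sub_apply,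
      ContinuousMap.one_apply, ContinuousMap.zero_apply] at hx
    omega
  · intro h
    constructor
    · intro x
      rcases h x with h1 | h1 <;> simp [h1]
    · intro a ha0 haf
      ext x
      have h1 : (0 : ℤ) ≤ a x := ha0 x
      have h2 : a x ≤ f x := haf x
      simp only [ContinuousMap.inf_apply, ContinuousMap.sub_apply,
        ContinuousMap.zero_apply] at *
      rcases h x with h3 | h3 <;> omega
end

section
/- Let X be a compact topological space and let f, g ∈ C(X, ℤ) with f ≥ 0 and g ≥ 0. Then there exists n ∈ ℕ such that (n • f) ⊓ g = ((n+1) • f) ⊓ g (infima and scalar multiples taken pointwise). -/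
/-- For a compact space `X` and `0 ≤ f, g` in `C(X, ℤ)`, there is `n : ℕ`
with `(n • f) ⊓ g = ((n+1) • f) ⊓ g`. -/
theorem stmt8 {X : Type*} [TopologicalSpace X] [CompactSpace X]
    (f g : C(X, ℤ)) (hf : 0 ≤ f) (hg : 0 ≤ g) :
    ∃ n : ℕ, (n • f) ⊓ g = ((n + 1) • f) ⊓ g := by
  obtain ⟨N, hN⟩ : BddAbove (Set.range g) := (isCompact_range g.continuous).bddAbove
  refine ⟨N.toNat, ?_⟩
  ext x
  have hgx : g x ≤ N := hN ⟨x, rfl⟩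
  have hgx0 : (0 : ℤ) ≤ g x := hg x
  have hfx : (0 : ℤ) ≤ f x := hf x
  simp only [ContinuousMap.inf_apply, ContinuousMap.smul_apply, nsmul_eq_mul, ContinuousMap.mul_apply, ContinuousMap.natCast_apply]
  rcases eq_or_lt_of_le hfx with h | h
  · simp [← h]
  · have h1 : (1 : ℤ) ≤ f x := h
    have hge : g x ≤ (N.toNat : ℤ) * f x := by
      calc g x ≤ N := hgx
        _ ≤ (N.toNat : ℤ) := Int.self_le_toNat N
        _ ≤ (N.toNat : ℤ) * f x := le_mul_of_one_le_right (by positivity) h1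
    have hge' : g x ≤ ((N.toNat + 1 : ℕ) : ℤ) * f x := by
      refine hge.trans ?_
      push_cast
      nlinarith
    rw [inf_eq_right.mpr hge, inf_eq_right.mpr hge']
end

section
/- Let (S, u) be a unital Specker ℓ-group and let P be a proper ℓ-ideal of S that is prime, i.e., for all a, b ∈ S with a ≥ 0, b ≥ 0 and a ⊓ b = 0, either a ∈ P or b ∈ P. Then P is a maximal ℓ-ideal of S. (Every unital Specker ℓ-group is hyperarchimedean.) -/
section Aux

variable {S : Type*} [Lattice S] [AddCommGroup S] [CovariantClass S S (· + ·) (· ≤ ·)]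

lemma aux_posPart_le {a c : S} (h : a ≤ c) (h0 : 0 ≤ c) : a⁺ ≤ c := by
  rw [posPart_def]; exact sup_le h h0

/-- Key lemma: if `P` is a prime ℓ-ideal and `b ∉ P` with `0 ≤ b`, then every
singular element `s` satisfies `(s - b)⁺ ∈ P`. -/
lemma aux_singular {P : AddSubgroup S} (hP : IsLIdeal P)
    (hprime : ∀ a b : S, 0 ≤ a → 0 ≤ b → a ⊓ b = 0 → a ∈ P ∨ b ∈ P)
    {b : S} (hb0 : 0 ≤ b) (hbP : b ∉ P) {s : S} (hs : IsSingular s) :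
    (s - b)⁺ ∈ P := by
  have h1 : (0 : S) ≤ s ⊓ b := le_inf hs.1 hb0
  have h2 : s ⊓ b ≤ s := inf_le_left
  have h3 : (0 : S) ≤ s - s ⊓ b := sub_nonneg.2 h2
  rcases hprime _ _ h1 h3 (hs.2 (s ⊓ b) h1 h2) with hc | hc
  · -- s ⊓ b ∈ P
    have hdis : (s - b)⁺ ⊓ (b - s)⁺ = 0 := by
      have := posPart_inf_negPart_eq_zero (s - b)
      rwa [negPart_def, neg_sub, ← posPart_def] at this
    rcases hprime ((s - b)⁺) ((b - s)⁺) (posPart_nonneg _) (posPart_nonneg _) hdis with h | h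
    · exact h
    · -- b = (s ⊓ b) + (b - s)⁺ ∈ P, contradiction
      exfalso
      apply hbP
      have hb : b - s ⊓ b = (b - s)⁺ := by
        rw [posPart_def, sub_eq_add_neg, neg_inf, add_sup, ← sub_eq_add_neg, ← sub_eq_add_neg,
          sub_self]
      have hmem : s ⊓ b + (b - s ⊓ b) ∈ P := P.add_mem hc (hb ▸ h)
      simpa using hmem
  · -- s - s ⊓ b ∈ P and (s - b)⁺ ≤ s - s ⊓ b
    refine hP _ _ ?_ hc
    rw [abs_of_nonneg (posPart_nonneg _), abs_of_nonneg h3]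
    exact aux_posPart_le (sub_le_sub_left inf_le_right s) h3

lemma aux_all (hSpecker : AddSubgroup.closure {s : S | IsSingular s} = ⊤)
    {P : AddSubgroup S} (hP : IsLIdeal P)
    (hprime : ∀ a b : S, 0 ≤ a → 0 ≤ b → a ⊓ b = 0 → a ∈ P ∨ b ∈ P)
    {b : S} (hb0 : 0 ≤ b) (hbP : b ∉ P) (g : S) :
    ∃ n : ℕ, (|g| - n • b)⁺ ∈ P := by
  have hg : g ∈ AddSubgroup.closure {s : S | IsSingular s} := by rw [hSpecker]; trivial
  induction hg using AddSubgroup.closure_induction with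
  | mem s hs =>
    exact ⟨1, by rw [abs_of_nonneg hs.1, one_smul]; exact aux_singular hP hprime hb0 hbP hs⟩
  | zero => exact ⟨0, by simpa using P.zero_mem⟩
  | add x y _ _ ihx ihy =>
    obtain ⟨n, hn⟩ := ihx
    obtain ⟨m, hm⟩ := ihy
    refine ⟨n + m, ?_⟩
    have hle : |x + y| - (n + m) • b ≤ (|x| - n • b)⁺ + (|y| - m • b)⁺ := by
      calc |x + y| - (n + m) • b ≤ (|x| + |y|) - (n + m) • b :=
            sub_le_sub_right (abs_add_le x y) _
        _ = (|x| - n • b) + (|y| - m • b) := by rw [add_smul]; abel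
        _ ≤ (|x| - n • b)⁺ + (|y| - m • b)⁺ :=
            add_le_add (le_posPart _) (le_posPart _)
    have hc0 : (0 : S) ≤ (|x| - n • b)⁺ + (|y| - m • b)⁺ :=
      add_nonneg (posPart_nonneg _) (posPart_nonneg _)
    refine hP _ _ ?_ (P.add_mem hn hm)
    rw [abs_of_nonneg (posPart_nonneg _), abs_of_nonneg hc0]
    exact aux_posPart_le hle hc0
  | neg x _ ihx => simpa [abs_neg] using ihx

end Aux

/-- In a unital Specker ℓ-group every prime proper ℓ-ideal is maximal
(hyperarchimedean property). -/
theorem stmt9 {S : Type*}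
    [Lattice S] [AddCommGroup S] [CovariantClass S S (· + ·) (· ≤ ·)]
    (hSpecker : AddSubgroup.closure {s : S | IsSingular s} = ⊤)
    (u : S) (hu0 : 0 ≤ u) (hu : ∀ g : S, ∃ n : ℕ, |g| ≤ n • u)
    (P : AddSubgroup S) (hP : IsLIdeal P) (hPproper : P ≠ ⊤)
    (hprime : ∀ a b : S, 0 ≤ a → 0 ≤ b → a ⊓ b = 0 → a ∈ P ∨ b ∈ P) :
    IsMaximalLIdeal P := by
  refine ⟨hP, hPproper, fun K hK hKtop hPK => ?_⟩
  refine le_antisymm hPK fun x hxK => ?_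
  by_contra hxP
  apply hKtop
  have hbK : |x| ∈ K := hK (|x|) x (by rw [abs_abs]) hxK
  have hbP : |x| ∉ P := fun h => hxP (hP x (|x|) (by rw [abs_abs]) h)
  rw [eq_top_iff]
  intro g _
  obtain ⟨n, hn⟩ := aux_all hSpecker hP hprime (abs_nonneg x) hbP g
  have hcK : (|g| - n • |x|)⁺ + n • |x| ∈ K := K.add_mem (hPK hn) (K.nsmul_mem hbK n)
  have hle : |g| ≤ (|g| - n • |x|)⁺ + n • |x| := by
    have := le_posPart (|g| - n • |x|)
    calc |g| = (|g| - n • |x|) + n • |x| := by abel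
      _ ≤ (|g| - n • |x|)⁺ + n • |x| := add_le_add this le_rfl
  refine hK g _ ?_ hcK
  rw [abs_of_nonneg (le_trans (abs_nonneg g) hle)]
  exact hle
end

section
/- Let (S, u) be a unital Specker ℓ-group and J a proper ℓ-ideal of S. Then J equals the intersection of all maximal ℓ-ideals of S containing J. -/
section Aux

variable {S : Type*} [Lattice S] [AddCommGroup S] [CovariantClass S S (· + ·) (· ≤ ·)]

/-- Riesz-type inequality. -/
lemma aux_riesz (a x y : S) (ha : 0 ≤ a) (hx : 0 ≤ x) (hy : 0 ≤ y) :
    a ⊓ (x + y) ≤ (a ⊓ x) + (a ⊓ y) := by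
  have : (a ⊓ x) + (a ⊓ y) = ((a + a) ⊓ (a + y)) ⊓ ((x + a) ⊓ (x + y)) := by
    rw [← add_inf, ← add_inf, ← inf_add]
  rw [this]
  refine le_inf (le_inf ?_ ?_) (le_inf ?_ ?_)
  · calc a ⊓ (x + y) ≤ a := inf_le_left
      _ ≤ a + a := le_add_of_nonneg_left ha
  · exact le_trans inf_le_left (le_add_of_nonneg_right hy)
  · exact le_trans inf_le_left (le_add_of_nonneg_left hx)
  · exact inf_le_right

lemma aux_disj_nsmul_right (a b : S) (ha : 0 ≤ a) (hb : 0 ≤ b) (h : a ⊓ b = 0)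
    (n : ℕ) : a ⊓ (n • b) = 0 := by
  induction n with
  | zero => simp [inf_eq_right.mpr ha]
  | succ k ih =>
    have h1 : a ⊓ ((k • b) + b) ≤ (a ⊓ (k • b)) + (a ⊓ b) :=
      aux_riesz a _ _ ha (nsmul_nonneg hb k) hb
    rw [ih, h, add_zero] at h1
    have h2 : 0 ≤ a ⊓ ((k • b) + b) :=
      le_inf ha (add_nonneg (nsmul_nonneg hb k) hb)
    rw [succ_nsmul]
    exact le_antisymm h1 h2

lemma aux_disj_nsmul (a b : S) (ha : 0 ≤ a) (hb : 0 ≤ b) (h : a ⊓ b = 0)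
    (n : ℕ) : (n • a) ⊓ (n • b) = 0 := by
  have h1 : a ⊓ (n • b) = 0 := aux_disj_nsmul_right a b ha hb h n
  have h2 : (n • b) ⊓ a = 0 := by rw [inf_comm] at h1; exact h1
  have := aux_disj_nsmul_right (n • b) a (nsmul_nonneg hb n) ha h2 n
  rw [inf_comm] at this; exact this

/-- The ℓ-ideal generated by an ℓ-ideal `M` and an element `g`. -/
def kgen (M : AddSubgroup S) (g : S) : AddSubgroup S where
  carrier := {x | ∃ m ∈ M, 0 ≤ m ∧ ∃ n : ℕ, |x| ≤ m + n • |g|}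
  zero_mem' := ⟨0, M.zero_mem, le_refl 0, 0, by simp⟩
  add_mem' := by
    rintro x y ⟨m₁, hm₁, hm₁0, n₁, h₁⟩ ⟨m₂, hm₂, hm₂0, n₂, h₂⟩
    refine ⟨m₁ + m₂, M.add_mem hm₁ hm₂, add_nonneg hm₁0 hm₂0, n₁ + n₂, ?_⟩
    calc |x + y| ≤ |x| + |y| := abs_add_le x y
      _ ≤ (m₁ + n₁ • |g|) + (m₂ + n₂ • |g|) := add_le_add h₁ h₂
      _ = (m₁ + m₂) + (n₁ + n₂) • |g| := by rw [add_nsmul]; abel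
  neg_mem' := by
    rintro x ⟨m, hm, hm0, n, h⟩
    exact ⟨m, hm, hm0, n, by rwa [abs_neg]⟩

lemma kgen_lideal (M : AddSubgroup S) (g : S) : IsLIdeal (kgen M g) := by
  rintro a b hab ⟨m, hm, hm0, n, h⟩
  exact ⟨m, hm, hm0, n, hab.trans h⟩

lemma le_kgen (M : AddSubgroup S) (hM : IsLIdeal M) (g : S) : M ≤ kgen M g := by
  intro x hx
  refine ⟨|x|, hM |x| x (by rw [abs_abs]) hx, abs_nonneg x, 0, by simp⟩

lemma self_mem_kgen (M : AddSubgroup S) (g : S) : g ∈ kgen M g :=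
  ⟨0, M.zero_mem, le_refl 0, 1, by simp⟩

lemma kgen_le (M K : AddSubgroup S) (hK : IsLIdeal K) (hMK : M ≤ K) (g : S)
    (hg : g ∈ K) : kgen M g ≤ K := by
  rintro x ⟨m, hm, hm0, n, h⟩
  have hgK : |g| ∈ K := hK |g| g (by rw [abs_abs]) hg
  have hmem : m + n • |g| ∈ K := K.add_mem (hMK hm) (K.nsmul_mem hgK n)
  refine hK x (m + n • |g|) ?_ hmem
  rwa [abs_of_nonneg (add_nonneg hm0 (nsmul_nonneg (abs_nonneg g) n))]

/-- abs membership in ℓ-ideals -/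
lemma myAbsMemIff (M : AddSubgroup S) (hM : IsLIdeal M) (g : S) :
    g ∈ M ↔ |g| ∈ M :=
  ⟨fun h => hM |g| g (by rw [abs_abs]) h, fun h => hM g |g| (by rw [abs_abs]) h⟩

/-- Every singular element lies in the ℓ-ideal generated by a "prime" ℓ-ideal
`M` and any `g ∉ M`. -/
lemma singular_mem_kgen (M : AddSubgroup S) (hM : IsLIdeal M)
    (hprime : ∀ a b : S, 0 ≤ a → 0 ≤ b → a ⊓ b = 0 → a ∈ M ∨ b ∈ M)
    (g : S) (hg : g ∉ M) (h : S) (hs : IsSingular h) : h ∈ kgen M g := by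
  set w := |g| with hw_def
  have hw : 0 ≤ w := abs_nonneg g
  set a := h ⊓ w with ha_def
  have ha0 : 0 ≤ a := le_inf hs.1 hw
  have hah : a ≤ h := inf_le_left
  have haw : a ≤ w := inf_le_right
  have key : h - a ∈ M → h ∈ kgen M g := by
    intro hmem
    refine ⟨h - a, hmem, sub_nonneg.mpr hah, 1, ?_⟩
    rw [abs_of_nonneg hs.1, one_nsmul]
    calc h = (h - a) + a := by abel
      _ ≤ (h - a) + w := by exact add_le_add le_rfl haw
  have d1 : (h - a) ⊓ (w - a) = 0 := by
    rw [← inf_sub, ← ha_def, sub_self]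
  rcases hprime (h - a) (w - a) (sub_nonneg.mpr hah) (sub_nonneg.mpr haw) d1 with h1 | h1
  · exact key h1
  · -- w - a ∈ M; then a ∉ M since g ∉ M
    have haM : a ∉ M := by
      intro haM
      have : w ∈ M := by
        have := M.add_mem h1 haM
        rwa [sub_add_cancel] at this
      exact hg ((myAbsMemIff M hM g).mpr this)
    have d2 : a ⊓ (h - a) = 0 := hs.2 a ha0 hah
    rcases hprime a (h - a) ha0 (sub_nonneg.mpr hah) d2 with h2 | h2
    · exact absurd h2 haM
    · exact key h2

end Aux

/-- In a unital Specker ℓ-group, every proper ℓ-ideal is the intersection of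
the maximal ℓ-ideals containing it. -/
theorem stmt10 {S : Type*}
    [Lattice S] [AddCommGroup S] [CovariantClass S S (· + ·) (· ≤ ·)]
    (hSpecker : AddSubgroup.closure {s : S | IsSingular s} = ⊤)
    (u : S) (hu0 : 0 ≤ u) (hu : ∀ g : S, ∃ n : ℕ, |g| ≤ n • u)
    (J : AddSubgroup S) (hJ : IsLIdeal J) (hJproper : J ≠ ⊤) :
    (J : Set S) =
      ⋂ m ∈ {m : AddSubgroup S | IsMaximalLIdeal m ∧ J ≤ m}, (m : Set S) := by
  apply Set.Subset.antisymm
  · intro x hx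
    simp only [Set.mem_iInter, Set.mem_setOf_eq]
    rintro m ⟨_, hJm⟩
    exact hJm hx
  · intro g hg
    by_contra hgJ
    -- find a value of g over J
    set s : Set (AddSubgroup S) := {K | IsLIdeal K ∧ J ≤ K ∧ g ∉ K} with hs_def
    have hJs : J ∈ s := ⟨hJ, le_refl J, hgJ⟩
    have hchain : ∀ c ⊆ s, IsChain (· ≤ ·) c → ∀ y ∈ c, ∃ ub ∈ s, ∀ z ∈ c, z ≤ ub := by
      intro c hcs hc y hy
      refine ⟨{ carrier := ⋃ K ∈ c, (K : Set S)
                zero_mem' := Set.mem_biUnion hy y.zero_mem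
                add_mem' := ?_
                neg_mem' := ?_ }, ⟨?_, ?_, ?_⟩, ?_⟩
      · rintro a b ha hb
        simp only [Set.mem_iUnion, SetLike.mem_coe] at ha hb ⊢
        obtain ⟨K₁, hK₁, haK⟩ := ha
        obtain ⟨K₂, hK₂, hbK⟩ := hb
        rcases hc.total hK₁ hK₂ with h | h
        · exact ⟨K₂, hK₂, K₂.add_mem (h haK) hbK⟩
        · exact ⟨K₁, hK₁, K₁.add_mem haK (h hbK)⟩
      · rintro a ha
        simp only [Set.mem_iUnion, SetLike.mem_coe] at ha ⊢
        obtain ⟨K, hK, haK⟩ := ha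
        exact ⟨K, hK, K.neg_mem haK⟩
      · -- IsLIdeal
        rintro a b hab hb
        change b ∈ ⋃ K ∈ c, (K : Set S) at hb
        change a ∈ ⋃ K ∈ c, (K : Set S)
        simp only [Set.mem_iUnion, SetLike.mem_coe] at hb ⊢
        obtain ⟨K, hK, hbK⟩ := hb
        exact ⟨K, hK, (hcs hK).1 a b hab hbK⟩
      · -- J ≤
        intro x hx
        change x ∈ ⋃ K ∈ c, (K : Set S)
        simp only [Set.mem_iUnion, SetLike.mem_coe]
        exact ⟨y, hy, (hcs hy).2.1 hx⟩
      · -- g ∉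
        change g ∉ ⋃ K ∈ c, (K : Set S)
        simp only [Set.mem_iUnion, SetLike.mem_coe]
        rintro ⟨K, hK, hgK⟩
        exact (hcs hK).2.2 hgK
      · intro K hK
        intro x hx
        change x ∈ ⋃ K ∈ c, (K : Set S)
        simp only [Set.mem_iUnion, SetLike.mem_coe]
        exact ⟨K, hK, hx⟩
    obtain ⟨M, hJM, hMs, hMmax⟩ : ∃ M, J ≤ M ∧ M ∈ s ∧ ∀ K ∈ s, M ≤ K → K = M := by
      obtain ⟨M, hJM, hMmax⟩ := zorn_le_nonempty₀ s hchain J hJs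
      exact ⟨M, hJM, hMmax.1, fun K hK hMK => le_antisymm (hMmax.2 hK hMK) hMK⟩
    obtain ⟨hMl, hJM', hgM⟩ := hMs
    -- M is prime
    have hprime : ∀ a b : S, 0 ≤ a → 0 ≤ b → a ⊓ b = 0 → a ∈ M ∨ b ∈ M := by
      intro a b ha hb hab
      by_contra hcon
      push_neg at hcon
      obtain ⟨haM, hbM⟩ := hcon
      have hga : g ∈ kgen M a := by
        by_contra hgka
        have : kgen M a ∈ s := ⟨kgen_lideal M a, hJM'.trans (le_kgen M hMl a), hgka⟩
        have := hMmax _ this (le_kgen M hMl a)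
        exact haM (this ▸ self_mem_kgen M a)
      have hgb : g ∈ kgen M b := by
        by_contra hgkb
        have : kgen M b ∈ s := ⟨kgen_lideal M b, hJM'.trans (le_kgen M hMl b), hgkb⟩
        have := hMmax _ this (le_kgen M hMl b)
        exact hbM (this ▸ self_mem_kgen M b)
      obtain ⟨m₁, hm₁, hm₁0, n₁, h₁⟩ := hga
      obtain ⟨m₂, hm₂, hm₂0, n₂, h₂⟩ := hgb
      rw [abs_of_nonneg ha] at h₁
      rw [abs_of_nonneg hb] at h₂
      set n := max n₁ n₂ with hn
      set m := m₁ + m₂ with hm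
      have hgle : |g| ≤ m + (n • a) ⊓ (n • b) := by
        rw [add_inf]
        refine le_inf ?_ ?_
        · calc |g| ≤ m₁ + n₁ • a := h₁
            _ ≤ m + n • a := by
              refine add_le_add (le_add_of_nonneg_right hm₂0)
                (nsmul_le_nsmul_left ha (le_max_left n₁ n₂))
        · calc |g| ≤ m₂ + n₂ • b := h₂
            _ ≤ m + n • b := by
              refine add_le_add (le_add_of_nonneg_left hm₁0)
                (nsmul_le_nsmul_left hb (le_max_right n₁ n₂))
      rw [aux_disj_nsmul a b ha hb hab n, add_zero] at hgle
      have : g ∈ M := by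
        refine hMl g m ?_ (M.add_mem hm₁ hm₂)
        rwa [abs_of_nonneg (add_nonneg hm₁0 hm₂0)]
      exact hgM this
    -- M is a maximal ℓ-ideal
    have hMtop : M ≠ ⊤ := fun h => hgM (h ▸ AddSubgroup.mem_top g)
    have hMmaximal : IsMaximalLIdeal M := by
      refine ⟨hMl, hMtop, fun K hKl hKtop hMK => ?_⟩
      by_contra hne
      obtain ⟨k, hkK, hkM⟩ : ∃ k, k ∈ K ∧ k ∉ M := by
        by_contra hcon
        push_neg at hcon
        exact hne (le_antisymm hMK hcon)
      -- singulars all lie in kgen M k ≤ K, so K = ⊤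
      have hsing : ∀ h : S, IsSingular h → h ∈ K := fun h hs =>
        kgen_le M K hKl hMK k hkK (singular_mem_kgen M hMl hprime k hkM h hs)
      have : (⊤ : AddSubgroup S) ≤ K := by
        rw [← hSpecker]
        exact AddSubgroup.closure_le K |>.mpr fun x hx => hsing x hx
      exact hKtop (le_antisymm le_top this)
    simp only [Set.mem_iInter, Set.mem_setOf_eq, SetLike.mem_coe] at hg
    exact hgM (hg M ⟨hMmaximal, hJM'⟩)
end

section
/- Let (G, u) be a unital abelian ℓ-group and J an ℓ-ideal of G (possibly equal to G). Then J is a maximal ℓ-ideal if and only if u ∉ J and for every a ∈ G with a ∉ J there exists n ∈ ℕ such that (u − n • |a|) ⊔ 0 ∈ J. -/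
/-- If a unit belongs to an ℓ-ideal, the ideal is everything. -/
lemma unit_mem_top {G : Type*}
    [Lattice G] [AddCommGroup G] [CovariantClass G G (· + ·) (· ≤ ·)]
    (u : G) (hu0 : 0 ≤ u) (hu : ∀ g : G, ∃ n : ℕ, |g| ≤ n • u)
    (K : AddSubgroup G) (hK : IsLIdeal K) (huK : u ∈ K) : K = ⊤ := by
  rw [AddSubgroup.eq_top_iff']
  intro g
  obtain ⟨n, hn⟩ := hu g
  exact hK g (n • u) (by rwa [abs_of_nonneg (nsmul_nonneg hu0 n)]) (K.nsmul_mem huK n)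

/-- Characterization of maximal ℓ-ideals in a unital abelian ℓ-group. -/
theorem stmt11 {G : Type*}
    [Lattice G] [AddCommGroup G] [CovariantClass G G (· + ·) (· ≤ ·)]
    (u : G) (hu0 : 0 ≤ u) (hu : ∀ g : G, ∃ n : ℕ, |g| ≤ n • u)
    (J : AddSubgroup G) (hJ : IsLIdeal J) :
    IsMaximalLIdeal J ↔
      u ∉ J ∧ ∀ a : G, a ∉ J → ∃ n : ℕ, (u - n • |a|) ⊔ 0 ∈ J := by
  constructor
  · rintro ⟨-, hJtop, hmax⟩
    have huJ : u ∉ J := fun h => hJtop (unit_mem_top u hu0 hu J hJ h)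
    refine ⟨huJ, fun a ha => ?_⟩
    -- ℓ-ideal generated by J and a
    set K : AddSubgroup G :=
      { carrier := {g | ∃ n : ℕ, ∃ j ∈ J, 0 ≤ j ∧ |g| ≤ n • |a| + j}
        zero_mem' := ⟨0, 0, J.zero_mem, le_refl 0, by simp⟩
        add_mem' := by
          rintro x y ⟨n, j, hjJ, hj0, hx⟩ ⟨m, k, hkJ, hk0, hy⟩
          refine ⟨n + m, j + k, J.add_mem hjJ hkJ, add_nonneg hj0 hk0, ?_⟩
          calc |x + y| ≤ |x| + |y| := abs_add_le x y
            _ ≤ (n • |a| + j) + (m • |a| + k) := add_le_add hx hy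
            _ = (n + m) • |a| + (j + k) := by rw [add_nsmul]; abel
        neg_mem' := by
          rintro x ⟨n, j, hjJ, hj0, hx⟩
          exact ⟨n, j, hjJ, hj0, by rwa [abs_neg]⟩ } with hKdef
    have hKideal : IsLIdeal K := by
      rintro x y hxy ⟨n, j, hjJ, hj0, hy⟩
      exact ⟨n, j, hjJ, hj0, hxy.trans hy⟩
    have hJK : J ≤ K := by
      intro g hg
      exact ⟨0, |g|, hJ |g| g (by rw [abs_abs]) hg, abs_nonneg g, by simp⟩
    have haK : a ∈ K := ⟨1, 0, J.zero_mem, le_refl 0, by simp⟩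
    have hJneK : J ≠ K := fun h => ha (h ▸ haK)
    have hKtop : K = ⊤ := by
      by_contra h
      exact hJneK (hmax K hKideal h hJK)
    have huK : u ∈ K := hKtop ▸ AddSubgroup.mem_top u
    obtain ⟨n, j, hjJ, hj0, hub⟩ := huK
    refine ⟨n, hJ _ j ?_ hjJ⟩
    have h1 : u - n • |a| ≤ j := sub_le_iff_le_add'.mpr ((le_abs_self u).trans hub)
    rw [abs_of_nonneg hj0, abs_of_nonneg (le_sup_right : (0:G) ≤ _)]
    exact sup_le h1 hj0
  · rintro ⟨huJ, hcond⟩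
    refine ⟨hJ, fun h => huJ (h ▸ AddSubgroup.mem_top u), fun K hKideal hKtop hJK => ?_⟩
    by_contra hne
    obtain ⟨a, haK, haJ⟩ : ∃ a, a ∈ K ∧ a ∉ J := by
      by_contra h
      push_neg at h
      exact hne (le_antisymm hJK h)
    obtain ⟨n, hn⟩ := hcond a haJ
    have h1 : (u - n • |a|) ⊔ 0 ∈ K := hJK hn
    have h2 : n • |a| ∈ K :=
      K.nsmul_mem (hKideal |a| a (by rw [abs_abs]) haK) n
    have h3 : ((u - n • |a|) ⊔ 0) + n • |a| ∈ K := K.add_mem h1 h2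
    have h4 : u ∈ K := by
      refine hKideal u _ ?_ h3
      have hnn : (0:G) ≤ ((u - n • |a|) ⊔ 0) + n • |a| :=
        add_nonneg le_sup_right (nsmul_nonneg (abs_nonneg a) n)
      rw [abs_of_nonneg hu0, abs_of_nonneg hnn]
      calc u = (u - n • |a|) + n • |a| := by abel
        _ ≤ ((u - n • |a|) ⊔ 0) + n • |a| := add_le_add_left le_sup_left _
    exact hKtop (unit_mem_top u hu0 hu K hKideal h4)
end

section
/- Let ψ : (G, u) → (H, v) be a unital ℓ-homomorphism between unital abelian ℓ-groups. For every maximal ℓ-ideal m of H, the preimage ψ⁻¹(m) = {g ∈ G | ψ(g) ∈ m} is a maximal ℓ-ideal of G. -/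
section Aux

variable {H : Type*} [Lattice H] [AddCommGroup H] [CovariantClass H H (· + ·) (· ≤ ·)]

/-- A proper ℓ-ideal cannot contain the unit. -/
lemma lideal_eq_top_of_unit_mem (v : H) (hv0 : 0 ≤ v) (hv : ∀ h : H, ∃ n : ℕ, |h| ≤ n • v)
    (J : AddSubgroup H) (hJ : IsLIdeal J) (hvJ : v ∈ J) : J = ⊤ := by
  rw [AddSubgroup.eq_top_iff']
  intro h
  obtain ⟨n, hn⟩ := hv h
  exact hJ h (n • v) (by rwa [abs_of_nonneg (nsmul_nonneg hv0 n)]) (J.nsmul_mem hvJ n)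

/-- Key criterion extracted from maximality. -/
lemma maximal_criterion (v : H) (hv0 : 0 ≤ v) (m : AddSubgroup H)
    (hm : IsMaximalLIdeal m) (h : H) (h0 : 0 ≤ h) (hhm : h ∉ m) :
    ∃ n : ℕ, (v - n • h)⁺ ∈ m := by
  set K : AddSubgroup H :=
    { carrier := {a | ∃ n : ℕ, ∃ j ∈ m, 0 ≤ j ∧ |a| ≤ j + n • h}
      zero_mem' := ⟨0, 0, m.zero_mem, le_rfl, by simp⟩
      add_mem' := by
        rintro a b ⟨n, j, hj, hj0, ha⟩ ⟨n', j', hj', hj0', hb⟩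
        refine ⟨n + n', j + j', m.add_mem hj hj', add_nonneg hj0 hj0', ?_⟩
        calc |a + b| ≤ |a| + |b| := abs_add_le a b
          _ ≤ (j + n • h) + (j' + n' • h) := add_le_add ha hb
          _ = (j + j') + (n + n') • h := by rw [add_nsmul]; abel
      neg_mem' := by
        rintro a ⟨n, j, hj, hj0, ha⟩
        exact ⟨n, j, hj, hj0, by rwa [abs_neg]⟩ } with hKdef
  have hKl : IsLIdeal K := by
    rintro a b hab ⟨n, j, hj, hj0, hb⟩
    exact ⟨n, j, hj, hj0, hab.trans hb⟩
  have hmK : m ≤ K := by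
    intro a ha
    exact ⟨0, |a|, hm.1 |a| a (by rw [abs_abs]) ha, abs_nonneg a, by simp⟩
  have hhK : h ∈ K := ⟨1, 0, m.zero_mem, le_rfl, by simp [abs_of_nonneg h0]⟩
  have hKtop : K = ⊤ := by
    by_contra hne
    exact hhm ((hm.2.2 K hKl hne hmK) ▸ hhK)
  have hvK : v ∈ K := hKtop ▸ AddSubgroup.mem_top v
  obtain ⟨n, j, hj, hj0, hvle⟩ := hvK
  rw [abs_of_nonneg hv0] at hvle
  refine ⟨n, ?_⟩
  have h1 : v - n • h ≤ j := sub_le_iff_le_add.2 hvle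
  have h2 : (v - n • h)⁺ ≤ j :=
    (posPart_mono h1).trans_eq (posPart_eq_self.2 hj0)
  exact hm.1 _ j (by rw [abs_of_nonneg (posPart_nonneg _), abs_of_nonneg hj0]; exact h2) hj

end Aux

/-- The preimage of a maximal ℓ-ideal under a unital ℓ-homomorphism between
unital abelian ℓ-groups is a maximal ℓ-ideal. -/
theorem stmt12 {G H : Type*}
    [Lattice G] [AddCommGroup G] [CovariantClass G G (· + ·) (· ≤ ·)]
    [Lattice H] [AddCommGroup H] [CovariantClass H H (· + ·) (· ≤ ·)]
    (u : G) (hu0 : 0 ≤ u) (hu : ∀ g : G, ∃ n : ℕ, |g| ≤ n • u)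
    (v : H) (hv0 : 0 ≤ v) (hv : ∀ h : H, ∃ n : ℕ, |h| ≤ n • v)
    (ψ : G →+ H)
    (hsup : ∀ x y : G, ψ (x ⊔ y) = ψ x ⊔ ψ y)
    (hinf : ∀ x y : G, ψ (x ⊓ y) = ψ x ⊓ ψ y)
    (hψu : ψ u = v)
    (m : AddSubgroup H) (hm : IsMaximalLIdeal m) :
    IsMaximalLIdeal (m.comap ψ) := by
  have hmono : ∀ x y : G, x ≤ y → ψ x ≤ ψ y := by
    intro x y h
    have h2 := hinf x y
    rw [inf_eq_left.2 h] at h2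
    rw [h2]; exact inf_le_right
  have habs : ∀ x : G, ψ |x| = |ψ x| := by
    intro x
    show ψ (x ⊔ -x) = ψ x ⊔ -ψ x
    rw [hsup, map_neg]
  refine ⟨?_, ?_, ?_⟩
  · intro a b hab hb
    exact hm.1 (ψ a) (ψ b) (by rw [← habs, ← habs]; exact hmono _ _ hab) hb
  · intro htop
    have humem : u ∈ m.comap ψ := htop ▸ AddSubgroup.mem_top u
    have hvm : v ∈ m := hψu ▸ humem
    exact hm.2.1 (lideal_eq_top_of_unit_mem v hv0 hv m hm.1 hvm)
  · intro K hK hKtop hle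
    refine le_antisymm hle fun g hg => ?_
    by_contra hgm
    set g' := |g| with hg'def
    have hg'K : g' ∈ K := hK g' g (by rw [hg'def, abs_abs]) hg
    have hg'm : ψ g' ∉ m := fun hmem =>
      hgm (hm.1 (ψ g) (ψ g') (by rw [hg'def, habs, abs_abs]) hmem)
    have h0' : (0 : H) ≤ ψ g' := by rw [hg'def, habs]; exact abs_nonneg _
    obtain ⟨n, hn⟩ := maximal_criterion v hv0 m hm (ψ g') h0' hg'm
    have hpre : (u - n • g')⁺ ∈ m.comap ψ := by
      have heq : ψ ((u - n • g')⁺) = (v - n • ψ g')⁺ := by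
        show ψ ((u - n • g') ⊔ 0) = (v - n • ψ g') ⊔ 0
        rw [hsup, map_zero, map_sub, map_nsmul, hψu]
      show ψ _ ∈ m
      rw [heq]; exact hn
    have huK : u ∈ K := by
      have h1 : u ≤ (u - n • g')⁺ + n • g' :=
        sub_le_iff_le_add.1 (le_posPart (u - n • g'))
      have hX : (u - n • g')⁺ + n • g' ∈ K := K.add_mem (hle hpre) (K.nsmul_mem hg'K n)
      have hX0 : (0 : G) ≤ (u - n • g')⁺ + n • g' :=
        add_nonneg (posPart_nonneg _) (nsmul_nonneg (hg'def ▸ abs_nonneg g) n)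
      exact hK u _ (by rw [abs_of_nonneg hu0, abs_of_nonneg hX0]; exact h1) hX
    exact hKtop (lideal_eq_top_of_unit_mem u hu0 hu K hK huK)
end

section
/- Let X be a boolean space. For each x ∈ X, the set m_x = {f ∈ C(X, ℤ) | f(x) = 0} is a maximal ℓ-ideal of C(X, ℤ), and the map x ↦ m_x is a homeomorphism from X onto Maxspec(C(X, ℤ)) equipped with the maximal spectral topology. -/
/-- The maximal spectrum of an abelian ℓ-group: the set of maximal ℓ-ideals. -/
def MaxSpec (G : Type*) [Lattice G] [AddCommGroup G] : Type _ :=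
  {m : AddSubgroup G // IsMaximalLIdeal m}

/-- The maximal spectral topology, with subbasis of open sets
`{m | g ∉ m}` for `g ∈ G`. -/
instance (G : Type*) [Lattice G] [AddCommGroup G] : TopologicalSpace (MaxSpec G) :=
  TopologicalSpace.generateFrom
    {U : Set (MaxSpec G) | ∃ g : G, U = {m : MaxSpec G | g ∉ m.1}}

/-- The ℓ-ideal of continuous functions vanishing at `x`. -/
def evalIdeal {X : Type*} [TopologicalSpace X] (x : X) : AddSubgroup C(X, ℤ) where
  carrier := {f : C(X, ℤ) | f x = 0}
  add_mem' := fun {a b} ha hb => by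
    simp only [Set.mem_setOf_eq, ContinuousMap.add_apply] at *
    omega
  zero_mem' := by simp
  neg_mem' := fun {a} ha => by
    simp only [Set.mem_setOf_eq, ContinuousMap.neg_apply] at *
    omega

theorem cabs_apply {X : Type*} [TopologicalSpace X] (f : C(X,ℤ)) (x : X) : |f| x = |f x| := by
  simp [abs]

theorem cbound {X : Type*} [TopologicalSpace X] [CompactSpace X] (h : C(X,ℤ)) :
    ∃ N : ℤ, ∀ x, |h x| ≤ N := by
  have hfin : (Set.range fun x => |h x|).Finite :=
    (isCompact_range (by continuity)).finite (by
      exact IsDiscrete.univ.mono (Set.subset_univ _))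
  obtain ⟨N, hN⟩ := hfin.bddAbove
  exact ⟨N, fun x => hN (Set.mem_range_self x)⟩

theorem lideal_eq_top {X : Type*} [TopologicalSpace X] [CompactSpace X]
    {K : AddSubgroup C(X,ℤ)} (hK : IsLIdeal K) (h1 : (1 : C(X,ℤ)) ∈ K) : K = ⊤ := by
  ext h
  simp only [AddSubgroup.mem_top, iff_true]
  obtain ⟨N, hN⟩ := cbound h
  have hNmem : N • (1 : C(X,ℤ)) ∈ K := AddSubgroup.zsmul_mem K h1 N
  refine hK h (N • 1) ?_ hNmem
  rw [ContinuousMap.le_def]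
  intro x
  rw [cabs_apply, cabs_apply]
  simp only [ContinuousMap.coe_smul, Pi.smul_apply, ContinuousMap.one_apply, smul_eq_mul, mul_one]
  calc |h x| ≤ N := hN x
    _ ≤ |N| := le_abs_self N
theorem mem_evalIdeal {X : Type*} [TopologicalSpace X] {x : X} {f : C(X,ℤ)} :
    f ∈ evalIdeal x ↔ f x = 0 := Iff.rfl

theorem evalIdeal_isLIdeal {X : Type*} [TopologicalSpace X] (x : X) :
    IsLIdeal (evalIdeal x) := by
  intro a b hab hb
  have := ContinuousMap.le_def.mp hab x
  rw [cabs_apply, cabs_apply, mem_evalIdeal.mp hb] at this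
  rw [mem_evalIdeal]
  simp only [abs_zero] at this
  exact abs_nonpos_iff.mp (by omega)

theorem evalIdeal_ne_top {X : Type*} [TopologicalSpace X] (x : X) :
    evalIdeal x ≠ (⊤ : AddSubgroup C(X,ℤ)) := by
  intro h
  have : (1 : C(X,ℤ)) ∈ evalIdeal x := h ▸ AddSubgroup.mem_top _
  simp [mem_evalIdeal] at this

theorem evalIdeal_maximal {X : Type*} [TopologicalSpace X] [CompactSpace X] (x : X) :
    IsMaximalLIdeal (evalIdeal x) := by
  refine ⟨evalIdeal_isLIdeal x, evalIdeal_ne_top x, fun K hK hKtop hle => ?_⟩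
  by_contra hne
  obtain ⟨f, hfK, hfx⟩ : ∃ f ∈ K, f ∉ evalIdeal x := by
    by_contra h
    push_neg at h
    exact hne (le_antisymm hle h)
  rw [mem_evalIdeal] at hfx
  have hg : f - ContinuousMap.const X (f x) ∈ evalIdeal x := by
    simp [mem_evalIdeal]
  have hconst : ContinuousMap.const X (f x) ∈ K := by
    have := K.sub_mem hfK (hle hg)
    simpa using this
  have h1 : (1 : C(X,ℤ)) ∈ K := by
    refine hK 1 (ContinuousMap.const X (f x)) ?_ hconst
    rw [ContinuousMap.le_def]
    intro y
    rw [cabs_apply, cabs_apply]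
    simp only [ContinuousMap.one_apply, ContinuousMap.const_apply, abs_one]
    exact Int.one_le_abs (by omega)
  exact hKtop (lideal_eq_top hK h1)

theorem maximal_eq_evalIdeal {X : Type*} [TopologicalSpace X] [CompactSpace X]
    {m : AddSubgroup C(X,ℤ)} (hm : IsMaximalLIdeal m) : ∃ x : X, m = evalIdeal x := by
  have key : ∃ x : X, ∀ f ∈ m, f x = 0 := by
    by_contra h'
    push_neg at h'
    choose f hfm hfx using h'
    have hcov : (Set.univ : Set X) ⊆ ⋃ x : X, {y | f x y ≠ 0} := by
      intro y _
      exact Set.mem_iUnion.mpr ⟨y, hfx y⟩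
    obtain ⟨t, ht⟩ := isCompact_univ.elim_finite_subcover (fun x => {y | f x y ≠ 0})
      (fun x => (isOpen_discrete ({0}ᶜ : Set ℤ)).preimage (f x).continuous) hcov
    set g : C(X,ℤ) := ∑ x ∈ t, |f x| with hg
    have hgm : g ∈ m := by
      refine AddSubgroup.sum_mem m fun x _ => ?_
      exact hm.1 |f x| (f x) (by rw [abs_abs]) (hfm x)
    have hg1 : ∀ y, 1 ≤ g y := by
      intro y
      obtain ⟨x, hxt, hxy⟩ := Set.mem_iUnion₂.mp (ht (Set.mem_univ y))
      have hterm : (1:ℤ) ≤ |f x| y := by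
        rw [cabs_apply]; exact Int.one_le_abs hxy
      clear_value g
      have hsum : |f x| y ≤ g y := by
        rw [hg]
        have : (∑ z ∈ t, |f z|) y = ∑ z ∈ t, |f z| y := by
          simp [ContinuousMap.coe_sum, Finset.sum_apply]
        rw [this]
        exact Finset.single_le_sum (f := fun z => |f z| y)
          (fun z _ => by show (0:ℤ) ≤ |f z| y; rw [cabs_apply]; exact abs_nonneg _) hxt
      omega
    have h1 : (1 : C(X,ℤ)) ∈ m := by
      refine hm.1 1 g ?_ hgm
      rw [ContinuousMap.le_def]
      intro y
      rw [cabs_apply, cabs_apply]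
      have h := hg1 y
      simp only [ContinuousMap.one_apply, abs_one]
      calc (1:ℤ) ≤ g y := h
        _ ≤ |g y| := le_abs_self _
    exact hm.2.1 (lideal_eq_top hm.1 h1)
  obtain ⟨x, hx⟩ := key
  exact ⟨x, hm.2.2 (evalIdeal x) (evalIdeal_isLIdeal x) (evalIdeal_ne_top x) hx⟩

open Classical in
noncomputable def indMap {X : Type*} [TopologicalSpace X] (U : Set X) (hU : IsClopen U) :
    C(X,ℤ) :=
  ⟨fun x => if x ∈ U then 1 else 0, by
    apply IsLocallyConstant.continuous
    intro s
    by_cases h1 : (1:ℤ) ∈ s <;> by_cases h0 : (0:ℤ) ∈ s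
    · convert isOpen_univ using 1
      ext x; by_cases hx : x ∈ U <;> simp [hx, h1, h0]
    · convert hU.2 using 1
      ext x; by_cases hx : x ∈ U <;> simp [hx, h1, h0]
    · convert hU.compl.2 using 1
      ext x; by_cases hx : x ∈ U <;> simp [hx, h1, h0]
    · convert isOpen_empty using 1
      ext x; by_cases hx : x ∈ U <;> simp [hx, h1, h0]⟩

open Classical in
theorem indMap_apply {X : Type*} [TopologicalSpace X] (U : Set X) (hU : IsClopen U) (x : X) :
    indMap U hU x = if x ∈ U then 1 else 0 := rfl

theorem evalIdeal_injective {X : Type*} [TopologicalSpace X] [CompactSpace X] [T2Space X]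
    [TotallyDisconnectedSpace X] : Function.Injective (evalIdeal (X := X)) := by
  intro x y hxy
  by_contra hne
  obtain ⟨V, hV, hxV, hVy⟩ : ∃ V : Set X, IsClopen V ∧ x ∈ V ∧ V ⊆ {y}ᶜ :=
    compact_exists_isClopen_in_isOpen (isOpen_compl_singleton) hne
  have h1 : indMap V hV ∈ evalIdeal y := by
    rw [mem_evalIdeal, indMap_apply]
    simp only [ite_eq_right_iff]
    intro hyV
    exact absurd rfl (hVy hyV)
  rw [← hxy, mem_evalIdeal, indMap_apply] at h1
  simp [hxV] at h1

/-- For a boolean space `X`, each `evalIdeal x` is a maximal ℓ-ideal of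
`C(X, ℤ)`, and `x ↦ evalIdeal x` is a homeomorphism from `X` onto the maximal
spectrum of `C(X, ℤ)` with the maximal spectral topology. -/
theorem stmt13 {X : Type*} [TopologicalSpace X] [CompactSpace X] [T2Space X]
    [TotallyDisconnectedSpace X] :
    (∀ x : X, IsMaximalLIdeal (evalIdeal x)) ∧
    ∃ e : X ≃ₜ MaxSpec C(X, ℤ), ∀ x : X, (e x).1 = evalIdeal x := by
  refine ⟨evalIdeal_maximal, ?_⟩
  let F : X → MaxSpec C(X,ℤ) := fun x => ⟨evalIdeal x, evalIdeal_maximal x⟩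
  have hbij : Function.Bijective F := by
    constructor
    · intro x y h
      exact evalIdeal_injective (congrArg Subtype.val h)
    · intro m
      obtain ⟨x, hx⟩ := maximal_eq_evalIdeal m.2
      exact ⟨x, Subtype.ext hx.symm⟩
  have hcont : Continuous F := by
    rw [continuous_generateFrom_iff]
    rintro U ⟨g, rfl⟩
    have hpre : F ⁻¹' {m : MaxSpec C(X,ℤ) | g ∉ m.1} = (g : X → ℤ) ⁻¹' {0}ᶜ := by
      ext x
      exact Iff.rfl
    rw [hpre]
    exact (isOpen_discrete ({0}ᶜ : Set ℤ)).preimage g.continuous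
  have himg : ∀ (V : Set X) (hV : IsClopen V),
      F '' V = {m : MaxSpec C(X,ℤ) | indMap V hV ∉ m.1} := by
    intro V hV
    ext m
    constructor
    · rintro ⟨x, hxV, rfl⟩
      simp only [Set.mem_setOf_eq, F, mem_evalIdeal, indMap_apply]
      show ¬ (indMap V hV x = 0)
      simp [indMap_apply, hxV]
    · intro hm
      obtain ⟨x, hx⟩ := maximal_eq_evalIdeal m.2
      refine ⟨x, ?_, Subtype.ext hx.symm⟩
      by_contra hxV
      apply hm
      rw [hx, mem_evalIdeal, indMap_apply]
      simp [hxV]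
  have hopen : IsOpenMap F := by
    intro U hU
    obtain ⟨S, hSB, rfl⟩ := isTopologicalBasis_isClopen.open_eq_sUnion hU
    rw [Set.image_sUnion]
    refine isOpen_sUnion ?_
    rintro W ⟨V, hVS, rfl⟩
    rw [himg V (hSB hVS)]
    exact TopologicalSpace.isOpen_generateFrom_of_mem ⟨indMap V (hSB hVS), rfl⟩
  exact ⟨Equiv.toHomeomorphOfContinuousOpen (Equiv.ofBijective F hbij) hcont hopen,
    fun x => rfl⟩
end

section
/- Let ψ : (S, u) → (T, v) be a unital ℓ-homomorphism between unital Specker ℓ-groups, and let ρ : T → ℤ and σ : S → ℤ be surjective ℓ-homomorphisms such that the kernel of σ equals the preimage under ψ of the kernel of ρ. Then there exists an integer k ≥ 1 such that ρ(ψ(g)) = k · σ(g) for all g ∈ S; in particular, ρ(v) = k · σ(u). -/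
/-- Given a unital ℓ-homomorphism `ψ` between unital Specker ℓ-groups and
surjective ℓ-homomorphisms `ρ : T → ℤ`, `σ : S → ℤ` with `ker σ = ψ⁻¹(ker ρ)`,
there is `k ≥ 1` with `ρ ∘ ψ = k · σ`; in particular `ρ v = k · σ u`. -/
theorem stmt14 {S T : Type*}
    [Lattice S] [AddCommGroup S] [CovariantClass S S (· + ·) (· ≤ ·)]
    [Lattice T] [AddCommGroup T] [CovariantClass T T (· + ·) (· ≤ ·)]
    (hSpeckerS : AddSubgroup.closure {s : S | IsSingular s} = ⊤)
    (hSpeckerT : AddSubgroup.closure {t : T | IsSingular t} = ⊤)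
    (u : S) (hu0 : 0 ≤ u) (hu : ∀ g : S, ∃ n : ℕ, |g| ≤ n • u)
    (v : T) (hv0 : 0 ≤ v) (hv : ∀ h : T, ∃ n : ℕ, |h| ≤ n • v)
    (ψ : S → T)
    (hψadd : ∀ x y : S, ψ (x + y) = ψ x + ψ y)
    (hψsup : ∀ x y : S, ψ (x ⊔ y) = ψ x ⊔ ψ y)
    (hψinf : ∀ x y : S, ψ (x ⊓ y) = ψ x ⊓ ψ y)
    (hψu : ψ u = v)
    (ρ : T → ℤ)
    (hρadd : ∀ x y : T, ρ (x + y) = ρ x + ρ y)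
    (hρsup : ∀ x y : T, ρ (x ⊔ y) = ρ x ⊔ ρ y)
    (hρinf : ∀ x y : T, ρ (x ⊓ y) = ρ x ⊓ ρ y)
    (hρsurj : Function.Surjective ρ)
    (σ : S → ℤ)
    (hσadd : ∀ x y : S, σ (x + y) = σ x + σ y)
    (hσsup : ∀ x y : S, σ (x ⊔ y) = σ x ⊔ σ y)
    (hσinf : ∀ x y : S, σ (x ⊓ y) = σ x ⊓ σ y)
    (hσsurj : Function.Surjective σ)
    (hker : σ ⁻¹' {0} = ψ ⁻¹' (ρ ⁻¹' {0})) :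
    ∃ k : ℤ, 1 ≤ k ∧ (∀ g : S, ρ (ψ g) = k * σ g) ∧ ρ v = k * σ u := by
  classical
  let σ' : S →+ ℤ := AddMonoidHom.mk' σ hσadd
  let ρ' : T →+ ℤ := AddMonoidHom.mk' ρ hρadd
  let τ : S →+ ℤ := AddMonoidHom.mk' (fun g => ρ (ψ g))
    (by intro a b; simp [hψadd, hρadd])
  have hτ : ∀ g : S, τ g = ρ (ψ g) := fun g => rfl
  have hσ' : ∀ g : S, σ' g = σ g := fun g => rfl
  have hk0 : ∀ g : S, σ g = 0 → ρ (ψ g) = 0 := by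
    intro g h
    have := Set.ext_iff.mp hker g
    simpa [h] using this
  have hσmono : ∀ x y : S, x ≤ y → σ x ≤ σ y := by
    intro x y h
    have : σ y = σ x ⊔ σ y := by rw [← hσsup, sup_eq_right.mpr h]
    rw [this]; exact le_sup_left
  have hρmono : ∀ x y : T, x ≤ y → ρ x ≤ ρ y := by
    intro x y h
    have : ρ y = ρ x ⊔ ρ y := by rw [← hρsup, sup_eq_right.mpr h]
    rw [this]; exact le_sup_left
  have hσu0 : 0 ≤ σ u := by
    have := hσmono 0 u hu0
    simpa [show σ (0:S) = 0 from map_zero σ'] using this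
  have hσu1 : 1 ≤ σ u := by
    obtain ⟨g, hg⟩ := hσsurj 1
    obtain ⟨n, hn⟩ := hu g
    have h1 : σ g ≤ σ (n • u) := hσmono _ _ ((le_abs_self g).trans hn)
    have h2 : σ (n • u) = n * σ u := by
      have := map_nsmul σ' n u
      simpa [hσ'] using this
    rw [hg, h2] at h1
    have : σ u ≠ 0 := by rintro h; rw [h] at h1; omega
    omega
  have hρv0 : 0 ≤ ρ v := by
    have := hρmono 0 v hv0
    simpa [show ρ (0:T) = 0 from map_zero ρ'] using this
  have hρv1 : 1 ≤ ρ v := by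
    obtain ⟨t, ht⟩ := hρsurj 1
    obtain ⟨n, hn⟩ := hv t
    have h1 : ρ t ≤ ρ (n • v) := hρmono _ _ ((le_abs_self t).trans hn)
    have h2 : ρ (n • v) = n * ρ v := by
      have := map_nsmul ρ' n v
      rw [nsmul_eq_mul] at this
      exact this
    rw [ht, h2] at h1
    have : ρ v ≠ 0 := by rintro h; rw [h] at h1; omega
    omega
  obtain ⟨g₁, hg₁⟩ := hσsurj 1
  set k : ℤ := ρ (ψ g₁) with hk
  have hmain : ∀ g : S, ρ (ψ g) = k * σ g := by
    intro g
    have hz : σ (g - σ g • g₁) = 0 := by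
      have : σ' (g - σ g • g₁) = σ' g - σ g • σ' g₁ := by
        rw [map_sub, map_zsmul]
      simpa [hσ', hg₁] using this
    have h0 : ρ (ψ (g - σ g • g₁)) = 0 := hk0 _ hz
    have hτz : τ (g - σ g • g₁) = τ g - σ g • τ g₁ := by
      rw [map_sub, map_zsmul]
    rw [hτ, h0, hτ, hτ] at hτz
    rw [smul_eq_mul] at hτz
    rw [← hk] at hτz
    linarith [hτz]
  have hρvu : ρ v = k * σ u := by rw [← hψu]; exact hmain u
  refine ⟨k, ?_, hmain, hρvu⟩
  nlinarith [hρvu, hσu1, hρv1]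
end

section
/- Let W and V be boolean spaces, let u_W ∈ C(W, ℤ) and u_V ∈ C(V, ℤ) satisfy u_W(x) ≥ 1 for all x ∈ W and u_V(y) ≥ 1 for all y ∈ V, and let ψ : C(V, ℤ) → C(W, ℤ) be an ℓ-homomorphism with ψ(u_V) = u_W. Then there exists a unique continuous map γ : W → V such that for all x ∈ W the integer u_V(γ(x)) divides u_W(x), and for all f ∈ C(V, ℤ) and all x ∈ W one has ψ(f)(x) · u_V(γ(x)) = f(γ(x)) · u_W(x). -/
/-- Every unital ℓ-homomorphism `ψ : C(V, ℤ) → C(W, ℤ)` between the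
ℓ-groups of continuous integer-valued functions on boolean spaces, with
units `u_V` and `u_W`, is induced by a unique continuous multiplicity-decreasing
map `γ : W → V`. -/
theorem stmt15 {W V : Type*}
    [TopologicalSpace W] [CompactSpace W] [T2Space W] [TotallyDisconnectedSpace W]
    [TopologicalSpace V] [CompactSpace V] [T2Space V] [TotallyDisconnectedSpace V]
    (uW : C(W, ℤ)) (uV : C(V, ℤ))
    (huW : ∀ x : W, 1 ≤ uW x) (huV : ∀ y : V, 1 ≤ uV y)
    (ψ : C(V, ℤ) → C(W, ℤ))
    (hadd : ∀ f g : C(V, ℤ), ψ (f + g) = ψ f + ψ g)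
    (hsup : ∀ f g : C(V, ℤ), ψ (f ⊔ g) = ψ f ⊔ ψ g)
    (hinf : ∀ f g : C(V, ℤ), ψ (f ⊓ g) = ψ f ⊓ ψ g)
    (hunit : ψ uV = uW) :
    ∃! γ : C(W, V), (∀ x : W, uV (γ x) ∣ uW x) ∧
      ∀ (f : C(V, ℤ)) (x : W), ψ f x * uV (γ x) = f (γ x) * uW x := by
  classical
  -- ψ as an additive monoid hom
  set Ψ : C(V, ℤ) →+ C(W, ℤ) := AddMonoidHom.mk' ψ hadd with hΨ
  have hψ0 : ψ 0 = 0 := Ψ.map_zero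
  have hzsmul : ∀ (n : ℤ) (f : C(V, ℤ)), ψ (n • f) = n • ψ f :=
    fun n f => map_zsmul Ψ n f
  have hψsub : ∀ a b : C(V, ℤ), ψ (a - b) = ψ a - ψ b :=
    fun a b => map_sub Ψ a b
  have hmono : ∀ {f g : C(V, ℤ)}, f ≤ g → ψ f ≤ ψ g := by
    intro f g h
    have h2 := hsup f g
    rw [sup_eq_right.mpr h] at h2
    calc ψ f ≤ ψ f ⊔ ψ g := le_sup_left
    _ = ψ g := h2.symm
  -- indicator continuous maps
  have indC : ∀ (g : C(V, ℤ)) (U : Set V), IsClopen U →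
      Continuous (fun v => if v ∈ U then g v else 0) := by
    intro g U hU
    refine Continuous.if ?_ g.continuous continuous_const
    intro a ha
    rw [Set.setOf_mem_eq, hU.frontier_eq] at ha
    exact absurd ha (Set.notMem_empty a)
  let e : ∀ U : Set V, IsClopen U → C(V, ℤ) := fun U hU =>
    ContinuousMap.mk (fun v => if v ∈ U then uV v else 0) (indC uV U hU)
  have he : ∀ {U : Set V} (hU : IsClopen U) (v : V),
      e U hU v = if v ∈ U then uV v else 0 := fun _ _ => rfl
  have hnonneg : ∀ {U : Set V} (hU : IsClopen U) (x : W), 0 ≤ ψ (e U hU) x := by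
    intro U hU x
    have h0 : (0 : C(V, ℤ)) ≤ e U hU := by
      rw [ContinuousMap.le_def]
      intro v
      simp only [he hU, ContinuousMap.zero_apply]
      split <;> [exact le_trans zero_le_one (huV v); exact le_refl 0]
    have := ContinuousMap.le_def.mp (hmono h0) x
    rwa [hψ0, ContinuousMap.zero_apply] at this
  have hle : ∀ {U : Set V} (hU : IsClopen U) (x : W), ψ (e U hU) x ≤ uW x := by
    intro U hU x
    have h0 : e U hU ≤ uV := by
      rw [ContinuousMap.le_def]
      intro v
      simp only [he hU]
      split <;> [exact le_refl _; exact le_trans zero_le_one (huV v)]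
    have := ContinuousMap.le_def.mp (hmono h0) x
    rwa [hunit] at this
  have hsplit : ∀ {U : Set V} (hU : IsClopen U) (x : W),
      ψ (e U hU) x + ψ (e Uᶜ hU.compl) x = uW x := by
    intro U hU x
    have hsum : e U hU + e Uᶜ hU.compl = uV := by
      ext v
      simp only [ContinuousMap.add_apply, he hU, he hU.compl, Set.mem_compl_iff]
      by_cases hv : v ∈ U <;> simp [hv]
    have := congrArg (fun g => ψ g x) hsum
    simpa [hadd, hunit] using this
  have hdisjt : ∀ {U : Set V} (hU : IsClopen U) (x : W),
      ψ (e U hU) x ⊓ ψ (e Uᶜ hU.compl) x = 0 := by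
    intro U hU x
    have hinf0 : e U hU ⊓ e Uᶜ hU.compl = 0 := by
      ext v
      simp only [ContinuousMap.inf_apply, he hU, he hU.compl, Set.mem_compl_iff,
        ContinuousMap.zero_apply]
      by_cases hv : v ∈ U
      · simp [hv, inf_eq_right.mpr (le_trans zero_le_one (huV v))]
      · simp [hv, inf_eq_left.mpr (le_trans zero_le_one (huV v))]
    have := congrArg (fun g => ψ g x) hinf0
    simpa [hinf, hψ0, ContinuousMap.inf_apply] using this
  have hdich : ∀ {U : Set V} (hU : IsClopen U) (x : W),
      ψ (e U hU) x = 0 ∨ ψ (e U hU) x = uW x := by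
    intro U hU x
    have h1 := hsplit hU x
    have h2 := hdisjt hU x
    have ha := hnonneg hU x
    have hb := hnonneg hU.compl x
    rcases le_total (ψ (e U hU) x) (ψ (e Uᶜ hU.compl) x) with h | h
    · rw [inf_eq_left.mpr h] at h2; omega
    · rw [inf_eq_right.mpr h] at h2; omega
  -- the "ultrafilter" property P x U
  have hPuniv : ∀ x : W, ψ (e Set.univ isClopen_univ) x = uW x := by
    intro x
    have : e Set.univ isClopen_univ = uV := by
      ext v; simp [he isClopen_univ]
    rw [this, hunit]
  have hPinter : ∀ {U U' : Set V} (hU : IsClopen U) (hU' : IsClopen U') (x : W),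
      ψ (e U hU) x = uW x → ψ (e U' hU') x = uW x →
      ψ (e (U ∩ U') (hU.inter hU')) x = uW x := by
    intro U U' hU hU' x h1 h2
    have hsum : e U hU + e U' hU' ≤ e (U ∩ U') (hU.inter hU') + uV := by
      rw [ContinuousMap.le_def]
      intro v
      have h0v : (0 : ℤ) ≤ uV v := le_trans zero_le_one (huV v)
      simp only [ContinuousMap.add_apply, he hU, he hU', he (hU.inter hU'), Set.mem_inter_iff]
      by_cases hv : v ∈ U <;> by_cases hv' : v ∈ U' <;> simp [hv, hv'] <;> omega
    have hψsum := hmono hsum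
    rw [hadd, hadd, hunit] at hψsum
    have hx := ContinuousMap.le_def.mp hψsum x
    simp only [ContinuousMap.add_apply] at hx
    rw [h1, h2] at hx
    have hge : uW x ≤ ψ (e (U ∩ U') (hU.inter hU')) x := by omega
    exact le_antisymm (hle (hU.inter hU') x) hge
  have hPne : ∀ {U : Set V} (hU : IsClopen U) (x : W),
      ψ (e U hU) x = uW x → U.Nonempty := by
    intro U hU x hP
    rcases Set.eq_empty_or_nonempty U with h | h
    · subst h
      have : e (∅ : Set V) hU = 0 := by ext v; simp [he hU]
      rw [this, hψ0] at hP
      have := huW x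
      simp only [ContinuousMap.zero_apply] at hP
      omega
    · exact h
  -- existence of the point γ(x)
  have hyex : ∀ x : W, ∃ y : V, ∀ (U : Set V) (hU : IsClopen U),
      ψ (e U hU) x = uW x → y ∈ U := by
    intro x
    let ι := {U : Set V // ∃ hU : IsClopen U, ψ (e U hU) x = uW x}
    have hι : Nonempty ι := ⟨⟨Set.univ, isClopen_univ, hPuniv x⟩⟩
    have hdir : Directed (· ⊇ ·) (fun i : ι => i.1) := by
      rintro ⟨U, hU, hPU⟩ ⟨U', hU', hPU'⟩
      exact ⟨⟨U ∩ U', hU.inter hU', hPinter hU hU' x hPU hPU'⟩,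
        Set.inter_subset_left, Set.inter_subset_right⟩
    obtain ⟨y, hy⟩ := IsCompact.nonempty_iInter_of_directed_nonempty_isCompact_isClosed
      (fun i : ι => i.1) hdir
      (fun i => hPne i.2.choose x i.2.choose_spec)
      (fun i => i.2.choose.isClosed.isCompact)
      (fun i => i.2.choose.isClosed)
    refine ⟨y, fun U hU hPU => ?_⟩
    exact Set.mem_iInter.mp hy ⟨U, hU, hPU⟩
  choose γf hγ using hyex
  -- the iff characterization
  have star : ∀ (x : W) (U : Set V) (hU : IsClopen U),
      (γf x ∈ U ↔ ψ (e U hU) x = uW x) := by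
    intro x U hU
    constructor
    · intro hmem
      rcases hdich hU x with h0 | h1
      · exfalso
        have hPc : ψ (e Uᶜ hU.compl) x = uW x := by
          have := hsplit hU x; omega
        have := hγ x Uᶜ hU.compl hPc
        exact this hmem
      · exact h1
    · exact hγ x U hU
  -- the key identity
  have key : ∀ (f : C(V, ℤ)) (x : W), ψ f x * uV (γf x) = f (γf x) * uW x := by
    intro f x
    set y := γf x with hy
    set U : Set V := (⇑f) ⁻¹' {f y} ∩ (⇑uV) ⁻¹' {uV y} with hUdef
    have hU : IsClopen U :=
      ((isClopen_discrete _).preimage f.continuous).inter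
        ((isClopen_discrete _).preimage uV.continuous)
    have hyU : y ∈ U := ⟨rfl, rfl⟩
    have hPU : ψ (e U hU) x = uW x := (star x U hU).mp hyU
    obtain ⟨d, hdv⟩ : ∃ d : C(V, ℤ), ∀ v, d v = if v ∈ U then f v else 0 :=
      ⟨ContinuousMap.mk _ (indC f U hU), fun v => by by_cases hv : v ∈ U <;> simp [hv]⟩
    -- m • d = c • e U
    have h1 : (uV y) • d = (f y) • e U hU := by
      ext v
      simp only [ContinuousMap.smul_apply, hdv, he hU, smul_eq_mul]
      by_cases hv : v ∈ U
      · obtain ⟨hv1, hv2⟩ := hv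
        simp only [Set.mem_preimage, Set.mem_singleton_iff] at hv1 hv2
        simp only [if_pos (show v ∈ U from ⟨hv1, hv2⟩), hv1, hv2, mul_comm]
      · simp [hv]
    have h2 : uV y * ψ d x = f y * uW x := by
      have := congrArg (fun g => ψ g x) h1
      simp only [hzsmul, ContinuousMap.smul_apply, smul_eq_mul] at this
      rw [this, hPU]
    -- ψ f x = ψ d x
    have hvanish : ∀ h : C(V, ℤ), (0 : C(V, ℤ)) ≤ h → (∀ v ∈ U, h v = 0) → ψ h x = 0 := by
      intro h hpos hz
      have hinf0 : h ⊓ e U hU = 0 := by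
        ext v
        have hpv : (0 : ℤ) ≤ h v := by
          have := ContinuousMap.le_def.mp hpos v
          simpa using this
        simp only [ContinuousMap.inf_apply, he hU, ContinuousMap.zero_apply]
        by_cases hv : v ∈ U
        · simp [hv, hz v hv, inf_eq_left.mpr (le_trans zero_le_one (huV v))]
        · simp [hv, inf_eq_right.mpr hpv]
      have hmin := congrArg (fun g => ψ g x) hinf0
      simp only [hinf, hψ0, ContinuousMap.inf_apply, ContinuousMap.zero_apply] at hmin
      rw [hPU] at hmin
      have hpos' : 0 ≤ ψ h x := by
        have := ContinuousMap.le_def.mp (hmono hpos) x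
        rwa [hψ0, ContinuousMap.zero_apply] at this
      have := huW x
      rcases le_total (ψ h x) (uW x) with hc | hc
      · rw [inf_eq_left.mpr hc] at hmin; omega
      · rw [inf_eq_right.mpr hc] at hmin; omega
    have h3 : ψ f x = ψ d x := by
      set h : C(V, ℤ) := f - d with hh
      have hhv : ∀ v ∈ U, h v = 0 := by
        intro v hv
        simp [hh, ContinuousMap.sub_apply, hdv, hv]
      have hppos : (0 : C(V, ℤ)) ≤ h ⊔ 0 := le_sup_right
      have hnpos : (0 : C(V, ℤ)) ≤ (-h) ⊔ 0 := le_sup_right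
      have hpz : ∀ v ∈ U, (h ⊔ 0) v = 0 := by
        intro v hv
        simp [ContinuousMap.sup_apply, hhv v hv]
      have hnz : ∀ v ∈ U, ((-h) ⊔ 0) v = 0 := by
        intro v hv
        simp [ContinuousMap.sup_apply, ContinuousMap.neg_apply, hhv v hv]
      have hp0 := hvanish _ hppos hpz
      have hn0 := hvanish _ hnpos hnz
      have hdecomp : h = (h ⊔ 0) - ((-h) ⊔ 0) := by
        ext v
        simp only [ContinuousMap.sub_apply, ContinuousMap.sup_apply,
          ContinuousMap.neg_apply, ContinuousMap.zero_apply]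
        rcases le_total (h v) 0 with hc | hc
        · rw [sup_eq_right.mpr hc, sup_eq_left.mpr (neg_nonneg.mpr hc)]; ring
        · rw [sup_eq_left.mpr hc, sup_eq_right.mpr (neg_nonpos.mpr hc)]; ring
      have hhx : ψ h x = 0 := by
        have h4 : ψ h = ψ (h ⊔ 0) - ψ ((-h) ⊔ 0) := by
          conv_lhs => rw [hdecomp]
          exact hψsub _ _
        have h5 := congrArg (fun g : C(W, ℤ) => g x) h4
        simp only [ContinuousMap.sub_apply] at h5
        rw [h5, hp0, hn0, sub_zero]
      have h6 : ψ f = ψ d + ψ h := by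
        rw [← hadd]
        congr 1
        rw [hh]
        ring
      have h7 := congrArg (fun g : C(W, ℤ) => g x) h6
      simp only [ContinuousMap.add_apply] at h7
      rw [h7, hhx, add_zero]
    rw [h3, mul_comm]
    exact h2
  -- divisibility
  have hdvd : ∀ x : W, uV (γf x) ∣ uW x := by
    intro x
    refine ⟨ψ 1 x, ?_⟩
    have hk := key 1 x
    simp only [ContinuousMap.one_apply, one_mul] at hk
    rw [← hk]
    ring
  -- continuity of γf
  have hcont : Continuous γf := by
    rw [continuous_iff_continuousAt]
    intro x O hO
    rw [Filter.mem_map]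
    obtain ⟨O', hO'sub, hO'open, hmemO'⟩ := mem_nhds_iff.mp hO
    obtain ⟨U, hU, hmemU, hUsub⟩ := compact_exists_isClopen_in_isOpen hO'open hmemO'
    have hSopen : IsOpen {x' : W | ψ (e U hU) x' = uW x'} := by
      have heq : {x' : W | ψ (e U hU) x' = uW x'} =
          (fun x' => ψ (e U hU) x' - uW x') ⁻¹' {0} := by
        ext x'; simp [sub_eq_zero]
      rw [heq]
      exact (isOpen_discrete _).preimage ((ψ (e U hU)).continuous.sub uW.continuous)
    have hxS : x ∈ {x' : W | ψ (e U hU) x' = uW x'} := (star x U hU).mp hmemU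
    refine Filter.mem_of_superset (hSopen.mem_nhds hxS) ?_
    intro x' hx'
    exact hO'sub (hUsub ((star x' U hU).mpr hx'))
  refine ⟨⟨γf, hcont⟩, ⟨hdvd, key⟩, ?_⟩
  rintro γ' ⟨-, hid⟩
  ext x
  show γ' x = γf x
  by_contra hne
  obtain ⟨U, hU, hmemU, hnmemU⟩ :=
    exists_isClopen_of_totally_separated (show γf x ≠ γ' x from fun h => hne h.symm)
  have hPU : ψ (e U hU) x = uW x := (star x U hU).mp hmemU
  have hid' := hid (e U hU) x
  rw [hPU, he hU (γ' x), if_neg hnmemU, zero_mul] at hid'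
  rcases mul_eq_zero.mp hid' with h | h
  · have := huW x; omega
  · have := huV (γ' x); omega
end

section
/- Consider the boolean multispace (Bool, u₀) where Bool carries the discrete topology and u₀(false) = 1, u₀(true) = 2. There do not exist a boolean multispace (P, v) and a family of Bms-morphisms p_i : (P, v) → (Bool, u₀) indexed by i ∈ ℕ such that for every boolean multispace (Q, w) and every family of Bms-morphisms q_i : (Q, w) → (Bool, u₀), i ∈ ℕ, there is a unique Bms-morphism h : (Q, w) → (P, v) with p_i ∘ h = q_i for all i ∈ ℕ. (The category of boolean multispaces lacks the countable power of (Bool, u₀).) -/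
/-- The multiplicity function on `Bool` with `u₀ false = 1` and `u₀ true = 2`. -/
def u₀ : Bool → ℤ := fun b => if b then 2 else 1

/-- The category of boolean multispaces lacks the countable power of
`(Bool, u₀)`: there is no boolean multispace `(P, v)` with a countable family of
Bms-morphisms to `(Bool, u₀)` enjoying the universal property of the product. -/
theorem stmt17 :
    ¬ ∃ (P : Type) (_ : TopologicalSpace P) (_ : CompactSpace P) (_ : T2Space P)
        (_ : TotallyDisconnectedSpace P) (v : P → ℤ) (_ : Continuous v)
        (_ : ∀ x : P, 1 ≤ v x) (p : ℕ → P → Bool) (_ : ∀ i, Continuous (p i))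
        (_ : ∀ (i : ℕ) (x : P), u₀ (p i x) ∣ v x),
      ∀ (Q : Type) (_ : TopologicalSpace Q) (_ : CompactSpace Q) (_ : T2Space Q)
        (_ : TotallyDisconnectedSpace Q) (w : Q → ℤ),
        Continuous w → (∀ y : Q, 1 ≤ w y) →
        ∀ q : ℕ → Q → Bool, (∀ i, Continuous (q i)) →
          (∀ (i : ℕ) (y : Q), u₀ (q i y) ∣ w y) →
          ∃! h : Q → P, Continuous h ∧ (∀ y : Q, v (h y) ∣ w y) ∧
            ∀ i : ℕ, p i ∘ h = q i := by
  rintro ⟨P, _, _, _, _, v, hv, hv1, p, hp, hpd, H⟩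
  -- Instance 1: Cantor space with w ≡ 2, q i = eval at i
  obtain ⟨h, ⟨hc, hd, hcm⟩, -⟩ :=
    H (ℕ → Bool) inferInstance inferInstance inferInstance inferInstance
      (fun _ => 2) continuous_const (fun _ => by norm_num)
      (fun i f => f i) (fun i => continuous_apply i)
      (fun i f => by by_cases hb : f i <;> simp [u₀, hb])
  -- Instance 2: point with w ≡ 1, q i ≡ false
  obtain ⟨h₀, ⟨h₀c, h₀d, h₀cm⟩, -⟩ :=
    H Unit inferInstance inferInstance inferInstance inferInstance
      (fun _ => 1) continuous_const (fun _ => le_refl 1)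
      (fun _ _ => false) (fun _ => continuous_const)
      (fun i y => by simp [u₀])
  -- Instance 3: point with w ≡ 2, q i ≡ false (for uniqueness)
  obtain ⟨g, -, guniq⟩ :=
    H Unit inferInstance inferInstance inferInstance inferInstance
      (fun _ => 2) continuous_const (fun _ => by norm_num)
      (fun _ _ => false) (fun _ => continuous_const)
      (fun i y => by simp [u₀])
  have e1 : (fun _ : Unit => h (fun _ => false)) = g :=
    guniq _ ⟨continuous_const, fun _ => hd _,
      fun i => funext fun _ => congrFun (hcm i) (fun _ => false)⟩
  have e2 : h₀ = g :=
    guniq _ ⟨h₀c, fun y => dvd_trans (h₀d y) (by norm_num), h₀cm⟩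
  -- value of v at image of all-false sequence is 1
  have hval1 : v (h (fun _ => false)) = 1 := by
    have heq : h (fun _ => false) = h₀ () := congrFun (e1.trans e2.symm) ()
    rw [heq]
    have hle : v (h₀ ()) ≤ 1 := Int.le_of_dvd one_pos (h₀d ())
    have := hv1 (h₀ ())
    omega
  -- value at single-true sequences is 2
  have hval2 : ∀ n : ℕ, v (h (fun i => decide (i = n))) = 2 := by
    intro n
    have d1 : v (h (fun i => decide (i = n))) ∣ 2 := hd _
    have hpn : p n (h (fun i => decide (i = n))) = true := by
      have := congrFun (hcm n) (fun i => decide (i = n))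
      simpa using this
    have d2 : (2 : ℤ) ∣ v (h (fun i => decide (i = n))) := by
      have := hpd n (h (fun i => decide (i = n)))
      rw [hpn] at this
      simpa [u₀] using this
    exact Int.dvd_antisymm (by linarith [hv1 (h (fun i => decide (i = n)))])
      (by norm_num) d1 d2
  -- the single-true sequences converge to the all-false sequence
  have ht : Filter.Tendsto (fun n : ℕ => (fun i => decide (i = n) : ℕ → Bool))
      Filter.atTop (nhds (fun _ => false)) := by
    rw [tendsto_pi_nhds]
    intro i
    apply Filter.Tendsto.congr' (f₁ := fun _ => false)
    · filter_upwards [Filter.eventually_gt_atTop i] with n hn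
      simp [Nat.ne_of_lt hn]
    · exact tendsto_const_nhds
  have hvt : Filter.Tendsto (fun n : ℕ => v (h (fun i => decide (i = n))))
      Filter.atTop (nhds (v (h (fun _ => false)))) :=
    ((hv.comp hc).tendsto _).comp ht
  rw [hval1] at hvt
  have : ∀ᶠ n in Filter.atTop, v (h (fun i => decide (i = n))) ∈ ({1} : Set ℤ) :=
    hvt ((isOpen_discrete _).mem_nhds rfl)
  obtain ⟨n, hn⟩ := this.exists
  rw [hval2 n] at hn
  exact absurd hn (by norm_num)
end

section
/- Let (X, u) and (X', u') be boolean multispaces and define v : X × X' → ℤ by v(x, x') = lcm(u(x), u'(x')). Then (X × X', v) is a boolean multispace (in particular, v is continuous), the coordinate projections π₁ : (X × X', v) → (X, u) and π₂ : (X × X', v) → (X', u') are Bms-morphisms, and for every boolean multispace (Q, w) and all Bms-morphisms f : (Q, w) → (X, u) and f' : (Q, w) → (X', u') there exists a unique Bms-morphism h : (Q, w) → (X × X', v) with π₁ ∘ h = f and π₂ ∘ h = f'. (Thus (X × X', v) is the categorical product of (X, u) and (X', u') in the category of boolean multispaces.) -/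
/-- The product of two boolean multispaces `(X, u)` and `(X', u')` in the
category of boolean multispaces is `(X × X', lcm(u, u'))` with the coordinate
projections. -/
theorem stmt19 {X X' : Type*}
    [TopologicalSpace X] [CompactSpace X] [T2Space X] [TotallyDisconnectedSpace X]
    [TopologicalSpace X'] [CompactSpace X'] [T2Space X'] [TotallyDisconnectedSpace X']
    (u : X → ℤ) (u' : X' → ℤ) (hu : Continuous u) (hu' : Continuous u')
    (hu1 : ∀ x : X, 1 ≤ u x) (hu'1 : ∀ x : X', 1 ≤ u' x) :
    Continuous (fun z : X × X' => (Int.lcm (u z.1) (u' z.2) : ℤ)) ∧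
    (∀ z : X × X', 1 ≤ (Int.lcm (u z.1) (u' z.2) : ℤ)) ∧
    (∀ z : X × X', u z.1 ∣ (Int.lcm (u z.1) (u' z.2) : ℤ)) ∧
    (∀ z : X × X', u' z.2 ∣ (Int.lcm (u z.1) (u' z.2) : ℤ)) ∧
    ∀ (Q : Type*) (_ : TopologicalSpace Q) (_ : CompactSpace Q) (_ : T2Space Q)
      (_ : TotallyDisconnectedSpace Q) (w : Q → ℤ),
      Continuous w → (∀ y : Q, 1 ≤ w y) →
      ∀ (f : Q → X) (f' : Q → X'), Continuous f → Continuous f' →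
        (∀ y : Q, u (f y) ∣ w y) → (∀ y : Q, u' (f' y) ∣ w y) →
        ∃! h : Q → X × X', Continuous h ∧
          (∀ y : Q, (Int.lcm (u (h y).1) (u' (h y).2) : ℤ) ∣ w y) ∧
          Prod.fst ∘ h = f ∧ Prod.snd ∘ h = f' := by
  refine ⟨?_, ?_, ?_, ?_, ?_⟩
  · exact (continuous_of_discreteTopology
      (α := ℤ × ℤ) (f := fun p => (Int.lcm p.1 p.2 : ℤ))).comp
      ((hu.comp continuous_fst).prodMk (hu'.comp continuous_snd))
  · intro z
    have h1 : u z.1 ≠ 0 := by linarith [hu1 z.1]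
    have h2 : u' z.2 ≠ 0 := by linarith [hu'1 z.2]
    have h := Nat.lcm_ne_zero (Int.natAbs_ne_zero.mpr h1) (Int.natAbs_ne_zero.mpr h2)
    exact_mod_cast Nat.pos_of_ne_zero h
  · intro z; exact Int.dvd_lcm_left _ _
  · intro z; exact Int.dvd_lcm_right _ _
  · intro Q _ _ _ _ w hw hw1 f f' hf hf' hdf hdf'
    refine ⟨fun y => (f y, f' y), ⟨hf.prodMk hf', fun y => Int.coe_lcm_dvd (hdf y) (hdf' y),
      rfl, rfl⟩, ?_⟩
    rintro h ⟨-, -, h1, h2⟩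
    funext y
    exact Prod.ext (congrFun h1 y) (congrFun h2 y)
end
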